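/- arXiv:1006.1054 — 6 statements merged into one kernel-verified Lean document; each statement's English description precedes it below -/
import Mathlib

section
/- Let A be the 3×3 Jordan block over ℂ with eigenvalue λ, |λ| = 1 (A has λ on the diagonal, 1 on the superdiagonal, 0 elsewhere). For x = (x_1, x_2, x_3) ∈ ℂ³, the limit set L(x) is nonempty if and only if x_2 = x_3 = 0, and in that case L(x) = D·x_1 × {0} × {0}, where D is the closure of {λ^n : n ∈ ℕ} in ℂ. -/
open Filter Topology

/-- The l×l Jordan block with eigenvalue lam: lam on the diagonal, 1 on the superdiagonal. -/
noncomputable def jordanBlock (l : ℕ) (lam : ℂ) : Matrix (Fin l) (Fin l) ℂ :=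
  Matrix.of fun i j => if j = i then lam else if (j : ℕ) = (i : ℕ) + 1 then 1 else 0

/-- Limit set L(x) of x under the matrix A. -/
def matL {l : ℕ} (A : Matrix (Fin l) (Fin l) ℂ) (x : Fin l → ℂ) : Set (Fin l → ℂ) :=
  {y | ∃ (k : ℕ → ℕ), StrictMono k ∧ 0 < k 0 ∧
    Tendsto (fun n => (A ^ k n).mulVec x) atTop (𝓝 y)}

/-- Extended limit set J(x) of x under the matrix A. -/
def matJ {l : ℕ} (A : Matrix (Fin l) (Fin l) ℂ) (x : Fin l → ℂ) : Set (Fin l → ℂ) :=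
  {y | ∃ (k : ℕ → ℕ) (z : ℕ → Fin l → ℂ), StrictMono k ∧ 0 < k 0 ∧
    Tendsto z atTop (𝓝 x) ∧ Tendsto (fun n => (A ^ k n).mulVec (z n)) atTop (𝓝 y)}

/-- Extended mixing limit set. -/
def matJmix {l : ℕ} (A : Matrix (Fin l) (Fin l) ℂ) (x : Fin l → ℂ) : Set (Fin l → ℂ) :=
  {y | ∃ (z : ℕ → Fin l → ℂ), Tendsto z atTop (𝓝 x) ∧
    Tendsto (fun n => (A ^ n).mulVec (z n)) atTop (𝓝 y)}

/-- Closure of the set of positive powers of lam. -/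
def Dset (lam : ℂ) : Set ℂ := closure {z | ∃ n : ℕ, 0 < n ∧ z = lam ^ n}

lemma exists_pow_near_one (lam : ℂ) (h : ‖lam‖ = 1) {δ : ℝ} (hδ : 0 < δ) :
    ∃ r : ℕ, 0 < r ∧ ‖lam ^ r - 1‖ < δ := by
  have hmem : ∀ n : ℕ, lam ^ n ∈ Metric.sphere (0:ℂ) 1 := by
    intro n
    simp [norm_pow, h, Complex.dist_eq]
  obtain ⟨a, -, φ, hφ, hconv⟩ := tendsto_subseq_of_bounded
    (Metric.isBounded_sphere (x := (0:ℂ)) (r := 1)) hmem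
  have hcauchy := hconv.cauchySeq
  rw [Metric.cauchySeq_iff] at hcauchy
  obtain ⟨N, hN⟩ := hcauchy δ hδ
  have hlt : φ N < φ (N + 1) := hφ (Nat.lt_succ_self N)
  refine ⟨φ (N + 1) - φ N, Nat.sub_pos_of_lt hlt, ?_⟩
  have hd := hN (N + 1) (Nat.le_succ N) N le_rfl
  have key : lam ^ (φ (N+1)) - lam ^ (φ N) = lam ^ (φ N) * (lam ^ (φ (N+1) - φ N) - 1) := by
    rw [mul_sub, mul_one, ← pow_add, Nat.add_sub_cancel' hlt.le]
  have : ‖lam ^ (φ (N+1)) - lam ^ (φ N)‖ = ‖lam ^ (φ (N+1) - φ N) - 1‖ := by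
    rw [key, norm_mul, norm_pow, h, one_pow, one_mul]
  rw [← this]
  simpa [Complex.dist_eq, Function.comp] using hd

lemma abs_pow_mul_sub_one_le (lam : ℂ) (h : ‖lam‖ = 1) (r t : ℕ) :
    ‖lam ^ (t * r) - 1‖ ≤ t * ‖lam ^ r - 1‖ := by
  induction t with
  | zero => simp
  | succ t ih =>
    have key : lam ^ ((t+1) * r) - 1 = lam ^ (t * r) * (lam ^ r - 1) + (lam ^ (t * r) - 1) := by
      rw [add_mul, one_mul, pow_add]
      ring
    calc ‖lam ^ ((t+1) * r) - 1‖
        ≤ ‖lam ^ (t*r) * (lam ^ r - 1)‖ + ‖lam ^ (t*r) - 1‖ := by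
          rw [key]; exact norm_add_le _ _
      _ ≤ ‖lam ^ r - 1‖ + t * ‖lam ^ r - 1‖ := by
          rw [norm_mul, norm_pow, h, one_pow, one_mul]; linarith
      _ = (t + 1 : ℕ) * ‖lam ^ r - 1‖ := by push_cast; ring

lemma dense_step (lam : ℂ) (h : ‖lam‖ = 1) {d : ℂ} (hd : d ∈ Dset lam)
    (N : ℕ) {ε : ℝ} (hε : 0 < ε) : ∃ m, N < m ∧ ‖lam ^ m - d‖ < ε := by
  obtain ⟨z, ⟨m₀, hm₀, rfl⟩, hz⟩ := Metric.mem_closure_iff.mp hd (ε/2) (by linarith)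
  obtain ⟨r, hr, hrδ⟩ := exists_pow_near_one lam h
    (δ := ε / (2 * (N + 1))) (by positivity)
  refine ⟨m₀ + (N+1) * r, ?_, ?_⟩
  · have : N + 1 ≤ (N+1) * r := Nat.le_mul_of_pos_right _ hr
    omega
  · have h1 : ‖lam ^ (m₀ + (N+1)*r) - lam ^ m₀‖
        = ‖lam ^ ((N+1)*r) - 1‖ := by
      rw [pow_add, ← mul_sub_one, norm_mul, norm_pow, h, one_pow, one_mul]
    have h2 : ‖lam ^ ((N+1)*r) - 1‖ ≤ (N+1) * ‖lam ^ r - 1‖ := by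
      simpa using abs_pow_mul_sub_one_le lam h r (N+1)
    have h3 : ((N:ℝ)+1) * ‖lam ^ r - 1‖ < ε / 2 := by
      have hpos : (0:ℝ) < (N:ℝ) + 1 := by positivity
      calc ((N:ℝ)+1) * ‖lam ^ r - 1‖ < ((N:ℝ)+1) * (ε / (2 * (N + 1))) :=
            by exact mul_lt_mul_of_pos_left hrδ hpos
        _ = ε / 2 := by field_simp
    calc ‖lam ^ (m₀ + (N+1)*r) - d‖
        ≤ ‖lam ^ (m₀ + (N+1)*r) - lam ^ m₀‖ + ‖lam ^ m₀ - d‖ := by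
          simpa using norm_sub_le_norm_sub_add_norm_sub (lam ^ (m₀ + (N+1)*r)) (lam ^ m₀) d
      _ < ε/2 + ε/2 := by
          have : ‖lam ^ m₀ - d‖ < ε / 2 := by
            rw [Complex.dist_eq] at hz; rwa [← norm_neg, neg_sub]
          push_cast at h2 h3 ⊢
          rw [h1]; exact add_lt_add_of_le_of_lt (le_trans h2 h3.le) this
      _ = ε := by ring

lemma key_subseq (lam : ℂ) (h : ‖lam‖ = 1) {d : ℂ} (hd : d ∈ Dset lam) :
    ∃ k : ℕ → ℕ, StrictMono k ∧ 0 < k 0 ∧ Tendsto (fun n => lam ^ k n) atTop (𝓝 d) := by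
  have H : ∀ N : ℕ, ∀ n : ℕ, ∃ m, N < m ∧ ‖lam ^ m - d‖ < 1 / (n + 1) := by
    intro N n
    exact dense_step lam h hd N (by positivity)
  choose F hF1 hF2 using H
  let k : ℕ → ℕ := fun n => Nat.rec (F 0 0) (fun n ih => F ih (n+1)) n
  have hk0 : k 0 = F 0 0 := rfl
  have hksucc : ∀ n, k (n+1) = F (k n) (n+1) := fun n => rfl
  have hmono : StrictMono k := strictMono_nat_of_lt_succ (fun n => by rw [hksucc]; exact hF1 _ _)
  have hbound : ∀ n, ‖lam ^ k n - d‖ < 1 / (n + 1) := by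
    intro n
    cases n with
    | zero => exact hF2 0 0
    | succ n => rw [hksucc]; exact hF2 _ _
  refine ⟨k, hmono, by rw [hk0]; exact Nat.pos_of_ne_zero (fun hz => by simpa [hz] using hF1 0 0), ?_⟩
  rw [tendsto_iff_dist_tendsto_zero]
  apply squeeze_zero (fun n => dist_nonneg) (fun n => ?_) tendsto_one_div_add_atTop_nhds_zero_nat
  rw [Complex.dist_eq]
  exact (hbound n).le

lemma mulVec_jordan (lam : ℂ) (v : Fin 3 → ℂ) :
    (jordanBlock 3 lam).mulVec v = ![lam * v 0 + v 1, lam * v 1 + v 2, lam * v 2] := by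
  funext i
  fin_cases i <;>
    simp [jordanBlock, Matrix.mulVec, dotProduct, Fin.sum_univ_three]

lemma pow_succ_mulVec (lam : ℂ) (x : Fin 3 → ℂ) (k : ℕ) :
    ((jordanBlock 3 lam) ^ (k+1)).mulVec x
      = (jordanBlock 3 lam).mulVec (((jordanBlock 3 lam) ^ k).mulVec x) := by
  rw [pow_succ', Matrix.mulVec_mulVec]

lemma comp2 (lam : ℂ) (x : Fin 3 → ℂ) (k : ℕ) :
    ((jordanBlock 3 lam) ^ k).mulVec x 2 = lam ^ k * x 2 := by
  induction k with
  | zero => simp [Matrix.mulVec_one]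
  | succ k ih => rw [pow_succ_mulVec, mulVec_jordan]; simp [ih]; ring

lemma comp1 (lam : ℂ) (x : Fin 3 → ℂ) (k : ℕ) :
    lam * ((jordanBlock 3 lam) ^ k).mulVec x 1
      = lam ^ (k+1) * x 1 + k * lam ^ k * x 2 := by
  induction k with
  | zero => simp [Matrix.mulVec_one]
  | succ k ih =>
    rw [pow_succ_mulVec, mulVec_jordan]
    show lam * (lam * _ + _) = _
    rw [comp2]
    push_cast
    linear_combination lam * ih

lemma comp0 (lam : ℂ) (x : Fin 3 → ℂ) (k : ℕ) (hx2 : x 2 = 0) :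
    lam * ((jordanBlock 3 lam) ^ k).mulVec x 0
      = lam ^ (k+1) * x 0 + k * lam ^ k * x 1 := by
  induction k with
  | zero => simp [Matrix.mulVec_one]
  | succ k ih =>
    rw [pow_succ_mulVec, mulVec_jordan]
    show lam * (lam * _ + _) = _
    have h1 : lam * (((jordanBlock 3 lam) ^ k).mulVec x 1) = lam ^ (k+1) * x 1 := by
      rw [comp1, hx2]; ring
    push_cast
    linear_combination lam * ih + h1

lemma comp_simple (lam : ℂ) (x : Fin 3 → ℂ) (hx1 : x 1 = 0) (hx2 : x 2 = 0) (k : ℕ) :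
    ((jordanBlock 3 lam) ^ k).mulVec x = ![lam ^ k * x 0, 0, 0] := by
  induction k with
  | zero =>
    funext i; fin_cases i <;> simp [Matrix.mulVec_one, hx1, hx2]
  | succ k ih =>
    rw [pow_succ_mulVec, ih, mulVec_jordan]
    funext i; fin_cases i <;> simp <;> ring

lemma abs_lower (a b : ℂ) : ‖b‖ - ‖a‖ ≤ ‖a + b‖ := by
  have h := norm_add_le (a + b) (-a)
  have h2 : a + b + -a = b := by ring
  rw [h2, norm_neg] at h
  linarith

/-- A sequence whose norm grows linearly along a strictly monotone index sequence
cannot converge. -/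
lemma no_conv {c b : ℝ} (hc : 0 < c) (g : ℕ → ℂ) (k : ℕ → ℕ) (hk : StrictMono k)
    (hlow : ∀ n, (k n : ℝ) * c - b ≤ ‖g n‖) {y : ℂ}
    (hconv : Tendsto g atTop (𝓝 y)) : False := by
  have habs : Tendsto (fun n => ‖g n‖) atTop (𝓝 (‖y‖)) :=
    (continuous_norm.continuousAt.tendsto).comp hconv
  have hlin : Tendsto (fun n : ℕ => (n:ℝ) * c - b) atTop atTop := by
    apply tendsto_atTop_add_const_right
    exact tendsto_natCast_atTop_atTop.atTop_mul_const hc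
  have hmono : Tendsto (fun n => ‖g n‖) atTop atTop := by
    apply tendsto_atTop_mono _ hlin
    intro n
    refine le_trans ?_ (hlow n)
    have : (n:ℝ) ≤ (k n : ℝ) := by exact_mod_cast hk.le_apply
    nlinarith
  exact not_tendsto_atTop_of_tendsto_nhds habs hmono

theorem stmt3 (lam : ℂ) (hlam : ‖lam‖ = 1) (x : Fin 3 → ℂ) :
    ((matL (jordanBlock 3 lam) x).Nonempty ↔ x 1 = 0 ∧ x 2 = 0) ∧
    (x 1 = 0 ∧ x 2 = 0 →
      matL (jordanBlock 3 lam) x =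
        {y | (∃ d ∈ Dset lam, y 0 = d * x 0) ∧ y 1 = 0 ∧ y 2 = 0}) := by
  have hlam0 : lam ≠ 0 := by
    intro h; rw [h] at hlam; simp at hlam
  have habslam : ∀ m : ℕ, ‖lam ^ m‖ = 1 := by
    intro m; rw [norm_pow, hlam, one_pow]
  constructor
  · constructor
    · rintro ⟨y, k, hk, hk0, hconv⟩
      have hc := tendsto_pi_nhds.mp hconv
      have hx2 : x 2 = 0 := by
        by_contra hx2
        have hc1 : Tendsto (fun n => lam * ((jordanBlock 3 lam) ^ k n).mulVec x 1)
            atTop (𝓝 (lam * y 1)) := (hc 1).const_mul lam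
        refine no_conv (c := ‖x 2‖) (b := ‖x 1‖)
          (by simpa using hx2) _ k hk (fun n => ?_) hc1
        rw [comp1]
        refine le_trans ?_ (abs_lower (lam ^ (k n + 1) * x 1) ((k n : ℂ) * lam ^ (k n) * x 2))
        rw [norm_mul, norm_mul, norm_mul, Complex.norm_natCast, habslam, habslam, mul_one, one_mul]
      have hx1 : x 1 = 0 := by
        by_contra hx1
        have hc0 : Tendsto (fun n => lam * ((jordanBlock 3 lam) ^ k n).mulVec x 0)
            atTop (𝓝 (lam * y 0)) := (hc 0).const_mul lam
        refine no_conv (c := ‖x 1‖) (b := ‖x 0‖)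
          (by simpa using hx1) _ k hk (fun n => ?_) hc0
        rw [comp0 lam x (k n) hx2]
        refine le_trans ?_ (abs_lower (lam ^ (k n + 1) * x 0) ((k n : ℂ) * lam ^ (k n) * x 1))
        rw [norm_mul, norm_mul, norm_mul, Complex.norm_natCast, habslam, habslam, mul_one, one_mul]
      exact ⟨hx1, hx2⟩
    · rintro ⟨hx1, hx2⟩
      have hmem : ∀ n : ℕ, lam ^ (n+1) * x 0 ∈ Metric.closedBall (0:ℂ) (‖x 0‖) := by
        intro n
        simp [Complex.dist_eq, norm_mul, norm_pow, hlam]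
      obtain ⟨a, -, φ, hφ, hconv⟩ := tendsto_subseq_of_bounded
        (Metric.isBounded_closedBall (x := (0:ℂ))) hmem
      refine ⟨![a, 0, 0], fun n => φ n + 1, fun m n h => by simpa using hφ h,
        Nat.succ_pos _, ?_⟩
      rw [tendsto_pi_nhds]
      intro i
      have heq : ∀ n, ((jordanBlock 3 lam) ^ (φ n + 1)).mulVec x = ![lam ^ (φ n + 1) * x 0, 0, 0] :=
        fun n => comp_simple lam x hx1 hx2 _
      fin_cases i
      · simpa [heq, Function.comp_def] using hconv
      · simpa [heq] using tendsto_const_nhds (x := (0:ℂ)) (f := atTop (α := ℕ))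
      · simpa [heq] using tendsto_const_nhds (x := (0:ℂ)) (f := atTop (α := ℕ))
  · rintro ⟨hx1, hx2⟩
    ext y
    constructor
    · rintro ⟨k, hk, hk0, hconv⟩
      have hc := tendsto_pi_nhds.mp hconv
      have heq : ∀ n, ((jordanBlock 3 lam) ^ (k n)).mulVec x = ![lam ^ (k n) * x 0, 0, 0] :=
        fun n => comp_simple lam x hx1 hx2 _
      have hy1 : y 1 = 0 := by
        have h0 : Tendsto (fun n => (0:ℂ)) atTop (𝓝 (y 1)) :=
          (hc 1).congr (fun n => by rw [heq n]; simp)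
        exact tendsto_nhds_unique h0 tendsto_const_nhds
      have hy2 : y 2 = 0 := by
        have h0 : Tendsto (fun n => (0:ℂ)) atTop (𝓝 (y 2)) :=
          (hc 2).congr (fun n => by rw [heq n]; simp)
        exact tendsto_nhds_unique h0 tendsto_const_nhds
      refine ⟨?_, hy1, hy2⟩
      by_cases hx0 : x 0 = 0
      · have hy0 : y 0 = 0 := by
          have h0 : Tendsto (fun n => (0:ℂ)) atTop (𝓝 (y 0)) :=
            (hc 0).congr (fun n => by rw [heq n]; simp [hx0])
          exact tendsto_nhds_unique h0 tendsto_const_nhds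
        exact ⟨lam, subset_closure ⟨1, one_pos, (pow_one lam).symm⟩, by rw [hy0, hx0, mul_zero]⟩
      · refine ⟨y 0 / x 0, ?_, by field_simp⟩
        have hpow : Tendsto (fun n => lam ^ k n) atTop (𝓝 (y 0 / x 0)) := by
          have := (hc 0).div_const (x 0)
          refine this.congr (fun n => ?_)
          rw [heq n]
          simp [mul_div_assoc, mul_div_cancel_right₀ _ hx0]
        refine mem_closure_of_tendsto hpow (Eventually.of_forall (fun n => ?_))
        exact ⟨k n, lt_of_lt_of_le hk0 (hk.monotone (Nat.zero_le n)), rfl⟩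
    · rintro ⟨⟨d, hd, hy0⟩, hy1, hy2⟩
      obtain ⟨k, hk, hk0, hpow⟩ := key_subseq lam hlam hd
      refine ⟨k, hk, hk0, ?_⟩
      rw [tendsto_pi_nhds]
      intro i
      have heq : ∀ n, ((jordanBlock 3 lam) ^ (k n)).mulVec x = ![lam ^ (k n) * x 0, 0, 0] :=
        fun n => comp_simple lam x hx1 hx2 _
      fin_cases i
      · show Tendsto (fun n => ((jordanBlock 3 lam) ^ (k n)).mulVec x 0) atTop (𝓝 (y 0))
        rw [hy0]
        exact (hpow.mul_const (x 0)).congr (fun n => by rw [heq n]; simp)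
      · show Tendsto (fun n => ((jordanBlock 3 lam) ^ (k n)).mulVec x 1) atTop (𝓝 (y 1))
        rw [hy1]
        exact tendsto_const_nhds.congr (fun n => by rw [heq n]; simp)
      · show Tendsto (fun n => ((jordanBlock 3 lam) ^ (k n)).mulVec x 2) atTop (𝓝 (y 2))
        rw [hy2]
        exact tendsto_const_nhds.congr (fun n => by rw [heq n]; simp)
end

section
/- Let A be the 4×4 Jordan block over ℂ with eigenvalue λ, |λ| = 1. Then J(0) = ℂ² × {0} × {0}, i.e., the extended limit set of the zero vector under A consists exactly of vectors (y_1, y_2, 0, 0). -/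
open Filter Topology

set_option maxHeartbeats 1000000 in
lemma jb_pow (lam : ℂ) (K : ℕ) :
    (jordanBlock 4 lam) ^ (K+3) =
    !![lam^(K+3), ((K:ℂ)+3)*lam^(K+2), ((K:ℂ)+3)*((K:ℂ)+2)/2*lam^(K+1), ((K:ℂ)+3)*((K:ℂ)+2)*((K:ℂ)+1)/6*lam^K;
       0, lam^(K+3), ((K:ℂ)+3)*lam^(K+2), ((K:ℂ)+3)*((K:ℂ)+2)/2*lam^(K+1);
       0, 0, lam^(K+3), ((K:ℂ)+3)*lam^(K+2);
       0, 0, 0, lam^(K+3)] := by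
  induction K with
  | zero =>
    show (jordanBlock 4 lam) ^ 3 = _
    rw [pow_succ, pow_succ, pow_one]
    ext i j
    fin_cases i <;> fin_cases j <;>
      simp (config := { decide := true }) [jordanBlock, Matrix.mul_apply, Fin.sum_univ_four,
        Matrix.vecHead, Matrix.vecTail] <;> ring
  | succ K ih =>
    have h : K + 1 + 3 = (K + 3) + 1 := by ring
    rw [h, pow_succ, ih]
    ext i j
    fin_cases i <;> fin_cases j <;>
      simp (config := { decide := true }) [jordanBlock, Matrix.mul_apply, Fin.sum_univ_four,
        Matrix.vecHead, Matrix.vecTail] <;> push_cast <;> ring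

lemma jb_mulVec (lam : ℂ) (K : ℕ) (z : Fin 4 → ℂ) :
    ((jordanBlock 4 lam)^(K+3)).mulVec z =
    ![lam^(K+3)*z 0 + ((K:ℂ)+3)*lam^(K+2)*z 1 + ((K:ℂ)+3)*((K:ℂ)+2)/2*lam^(K+1)*z 2
        + ((K:ℂ)+3)*((K:ℂ)+2)*((K:ℂ)+1)/6*lam^K*z 3,
      lam^(K+3)*z 1 + ((K:ℂ)+3)*lam^(K+2)*z 2 + ((K:ℂ)+3)*((K:ℂ)+2)/2*lam^(K+1)*z 3,
      lam^(K+3)*z 2 + ((K:ℂ)+3)*lam^(K+2)*z 3,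
      lam^(K+3)*z 3] := by
  rw [jb_pow]
  ext i
  fin_cases i <;>
    simp [Matrix.mulVec, dotProduct, Fin.sum_univ_four] <;> ring

lemma tendsto_inv_nat_complex : Tendsto (fun m : ℕ => ((m:ℂ))⁻¹) atTop (𝓝 0) := by
  rw [tendsto_zero_iff_norm_tendsto_zero]
  have h : Tendsto (fun n : ℕ => 1 / (n:ℝ)) atTop (𝓝 0) := tendsto_one_div_atTop_nhds_zero_nat
  refine h.congr fun m => ?_
  simp [norm_inv]

lemma cdiv_tendsto (c : ℝ) : Tendsto (fun n : ℕ => c / ((n:ℝ)+1)) atTop (𝓝 0) := by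
  have := tendsto_one_div_add_atTop_nhds_zero_nat.const_mul c
  simpa [div_eq_mul_inv, mul_comm] using this

noncomputable def eC (n : ℕ) : ℂ := ((n:ℂ)+3)^2*((n:ℂ)+2)*((n:ℂ)+4)

noncomputable def pseq (lam y0 y1 : ℂ) (n : ℕ) : ℂ :=
  (((n:ℂ)+3)*((n:ℂ)+2)*6 * lam * y0 - ((n:ℂ)+3)*((n:ℂ)+2)*((n:ℂ)+1)*2 * y1) / (eC n * lam^(n+2))

noncomputable def qseq (lam y0 y1 : ℂ) (n : ℕ) : ℂ :=
  (((n:ℂ)+3)*((n:ℂ)+2)*6 * y1 - ((n:ℂ)+3)*12 * lam * y0) / (eC n * lam^(n+1))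

lemma eC_eq (n : ℕ) : eC n = ((((((n:ℝ)+3)^2*((n:ℝ)+2)*((n:ℝ)+4)) : ℝ)) : ℂ) := by
  unfold eC; push_cast; ring

lemma eC_ne (n : ℕ) : eC n ≠ 0 := by
  rw [eC_eq]
  rw [Complex.ofReal_ne_zero]
  positivity

lemma pseq_bound (lam y0 y1 : ℂ) (hlam : ‖lam‖ = 1) (n : ℕ) :
    ‖pseq lam y0 y1 n‖ ≤ 12*(‖y0‖+‖y1‖)/((n:ℝ)+1) := by
  have hl : ‖lam‖ = 1 := hlam
  have hln : ∀ m : ℕ, ‖lam^m‖ = 1 := fun m => by rw [norm_pow, hl, one_pow]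
  unfold pseq
  have hepos : (0:ℝ) < ((n:ℝ)+3)^2*((n:ℝ)+2)*((n:ℝ)+4) := by positivity
  rw [norm_div, norm_mul, hln, mul_one, eC_eq, Complex.norm_real, Real.norm_of_nonneg hepos.le]
  have h1 : (((n:ℂ)+3)*((n:ℂ)+2)*6 : ℂ) = ((( ((n:ℝ)+3)*((n:ℝ)+2)*6 : ℝ)) : ℂ) := by
    push_cast; ring
  have h2 : (((n:ℂ)+3)*((n:ℂ)+2)*((n:ℂ)+1)*2 : ℂ)
      = ((( ((n:ℝ)+3)*((n:ℝ)+2)*((n:ℝ)+1)*2 : ℝ)) : ℂ) := by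
    push_cast; ring
  have hnum : ‖(((n:ℂ)+3)*((n:ℂ)+2)*6 * lam * y0 - ((n:ℂ)+3)*((n:ℂ)+2)*((n:ℂ)+1)*2 * y1)‖
      ≤ ((n:ℝ)+3)*((n:ℝ)+2)*6 * ‖y0‖ + ((n:ℝ)+3)*((n:ℝ)+2)*((n:ℝ)+1)*2 * ‖y1‖ := by
    refine (norm_sub_le _ _).trans ?_
    have e1 : ‖(((n:ℂ)+3)*((n:ℂ)+2)*6 * lam * y0)‖ = ((n:ℝ)+3)*((n:ℝ)+2)*6 * ‖y0‖ := by
      rw [norm_mul, norm_mul, hl, mul_one, h1, Complex.norm_real,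
        Real.norm_of_nonneg (by positivity)]
    have e2 : ‖(((n:ℂ)+3)*((n:ℂ)+2)*((n:ℂ)+1)*2 * y1)‖
        = ((n:ℝ)+3)*((n:ℝ)+2)*((n:ℝ)+1)*2 * ‖y1‖ := by
      rw [norm_mul, h2, Complex.norm_real, Real.norm_of_nonneg (by positivity)]
    rw [e1, e2]
  rw [div_le_div_iff₀ hepos (by positivity)]
  have hx : (0:ℝ) ≤ (n:ℝ) := Nat.cast_nonneg n
  have hA : ((n:ℝ)+3)*((n:ℝ)+2)*6*((n:ℝ)+1) ≤ 12*(((n:ℝ)+3)^2*((n:ℝ)+2)*((n:ℝ)+4)) := by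
    nlinarith [sq_nonneg ((n:ℝ)), mul_nonneg hx hx, mul_nonneg (mul_nonneg hx hx) hx]
  have hB : ((n:ℝ)+3)*((n:ℝ)+2)*((n:ℝ)+1)*2*((n:ℝ)+1) ≤ 12*(((n:ℝ)+3)^2*((n:ℝ)+2)*((n:ℝ)+4)) := by
    nlinarith [sq_nonneg ((n:ℝ)), mul_nonneg hx hx, mul_nonneg (mul_nonneg hx hx) hx]
  nlinarith [mul_le_mul_of_nonneg_left hA (norm_nonneg y0),
    mul_le_mul_of_nonneg_left hB (norm_nonneg y1),
    mul_le_mul_of_nonneg_right hnum (show (0:ℝ) ≤ (n:ℝ)+1 by positivity),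
    norm_nonneg y0, norm_nonneg y1]

lemma qseq_bound (lam y0 y1 : ℂ) (hlam : ‖lam‖ = 1) (n : ℕ) :
    ((n:ℝ)+3) * ‖qseq lam y0 y1 n‖ ≤ 12*(‖y0‖+‖y1‖)/((n:ℝ)+1) := by
  have hl : ‖lam‖ = 1 := hlam
  have hln : ∀ m : ℕ, ‖lam^m‖ = 1 := fun m => by rw [norm_pow, hl, one_pow]
  unfold qseq
  have hepos : (0:ℝ) < ((n:ℝ)+3)^2*((n:ℝ)+2)*((n:ℝ)+4) := by positivity
  rw [norm_div, norm_mul, hln, mul_one, eC_eq, Complex.norm_real, Real.norm_of_nonneg hepos.le]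
  have h1 : (((n:ℂ)+3)*((n:ℂ)+2)*6 : ℂ) = ((( ((n:ℝ)+3)*((n:ℝ)+2)*6 : ℝ)) : ℂ) := by
    push_cast; ring
  have h3 : (((n:ℂ)+3)*12 : ℂ) = ((( ((n:ℝ)+3)*12 : ℝ)) : ℂ) := by push_cast; ring
  have hnum : ‖(((n:ℂ)+3)*((n:ℂ)+2)*6 * y1 - ((n:ℂ)+3)*12 * lam * y0)‖
      ≤ ((n:ℝ)+3)*((n:ℝ)+2)*6 * ‖y1‖ + ((n:ℝ)+3)*12 * ‖y0‖ := by
    refine (norm_sub_le _ _).trans ?_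
    have e1 : ‖(((n:ℂ)+3)*((n:ℂ)+2)*6 * y1)‖ = ((n:ℝ)+3)*((n:ℝ)+2)*6 * ‖y1‖ := by
      rw [norm_mul, h1, Complex.norm_real, Real.norm_of_nonneg (by positivity)]
    have e2 : ‖(((n:ℂ)+3)*12 * lam * y0)‖ = ((n:ℝ)+3)*12 * ‖y0‖ := by
      rw [norm_mul, norm_mul, hl, mul_one, h3, Complex.norm_real,
        Real.norm_of_nonneg (by positivity)]
    rw [e1, e2]
  rw [mul_div_assoc', div_le_div_iff₀ hepos (by positivity)]
  have hx : (0:ℝ) ≤ (n:ℝ) := Nat.cast_nonneg n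
  have hA : ((n:ℝ)+3)*(((n:ℝ)+3)*12)*((n:ℝ)+1) ≤ 12*(((n:ℝ)+3)^2*((n:ℝ)+2)*((n:ℝ)+4)) := by
    nlinarith [sq_nonneg ((n:ℝ)), mul_nonneg hx hx, mul_nonneg (mul_nonneg hx hx) hx]
  have hB : ((n:ℝ)+3)*(((n:ℝ)+3)*((n:ℝ)+2)*6)*((n:ℝ)+1) ≤ 12*(((n:ℝ)+3)^2*((n:ℝ)+2)*((n:ℝ)+4)) := by
    nlinarith [sq_nonneg ((n:ℝ)), mul_nonneg hx hx, mul_nonneg (mul_nonneg hx hx) hx]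
  nlinarith [mul_le_mul_of_nonneg_left hA (norm_nonneg y0),
    mul_le_mul_of_nonneg_left hB (norm_nonneg y1),
    mul_le_mul_of_nonneg_right (mul_le_mul_of_nonneg_left hnum (show (0:ℝ) ≤ (n:ℝ)+3 by positivity)) (show (0:ℝ) ≤ (n:ℝ)+1 by positivity),
    norm_nonneg y0, norm_nonneg y1]

lemma norm_nadd3 (n : ℕ) : ‖((n:ℂ)+3)‖ = (n:ℝ)+3 := by
  rw [show ((n:ℂ)+3) = (((((n:ℝ))+3) : ℝ) : ℂ) by push_cast; ring, Complex.norm_real,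
    Real.norm_of_nonneg (by positivity)]

lemma nadd3_ne (n : ℕ) : ((n:ℂ)+3) ≠ 0 := by
  intro h
  have := congrArg (norm : ℂ → ℝ) h
  rw [norm_nadd3] at this
  simp at this
  nlinarith [Nat.cast_nonneg (α := ℝ) n]

lemma nadd_ne (n : ℕ) (r : ℕ) (hr : 0 < r) : ((n:ℂ)+(r:ℂ)) ≠ 0 := by
  have : ((n:ℂ)+(r:ℂ)) = (((n+r : ℕ)) : ℂ) := by push_cast; ring
  rw [this]
  exact Nat.cast_ne_zero.mpr (by omega)

set_option maxHeartbeats 1000000 in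
theorem stmt7 (lam : ℂ) (hlam : ‖lam‖ = 1) :
    matJ (jordanBlock 4 lam) 0 = {y | y 2 = 0 ∧ y 3 = 0} := by
  have hl : ‖lam‖ = 1 := hlam
  have hl0 : lam ≠ 0 := by
    intro h; rw [h] at hl; simp at hl
  have hln : ∀ m : ℕ, ‖lam^m‖ = 1 := fun m => by rw [norm_pow, hl, one_pow]
  ext y
  simp only [matJ, Set.mem_setOf_eq]
  constructor
  · rintro ⟨k, z, hk, hk0, hz, hw⟩
    set W : ℕ → Fin 4 → ℂ := fun n => ((jordanBlock 4 lam) ^ k n).mulVec (z n) with hWdef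
    have hkn : ∀ n, n ≤ k n := fun n => hk.le_apply
    have hwi : ∀ i, Tendsto (fun n => W n i) atTop (𝓝 (y i)) :=
      fun i => tendsto_pi_nhds.mp hw i
    have hzi : ∀ i, Tendsto (fun n => z n i) atTop (𝓝 0) := by
      intro i
      simpa using tendsto_pi_nhds.mp hz i
    have hκinv : Tendsto (fun n => ((k n : ℂ))⁻¹) atTop (𝓝 0) :=
      tendsto_inv_nat_complex.comp hk.tendsto_atTop
    -- the component formulas, eventually
    have hWform : ∀ n : ℕ, 3 ≤ n →
        W n 0 = lam^((k n - 3)+3) * z n 0 + (((k n - 3 : ℕ):ℂ)+3)*lam^((k n - 3)+2)*z n 1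
          + (((k n - 3 : ℕ):ℂ)+3)*(((k n - 3 : ℕ):ℂ)+2)/2*lam^((k n - 3)+1)*z n 2
          + (((k n - 3 : ℕ):ℂ)+3)*(((k n - 3 : ℕ):ℂ)+2)*(((k n - 3 : ℕ):ℂ)+1)/6*lam^(k n - 3)*z n 3
        ∧ W n 2 = lam^((k n - 3)+3) * z n 2 + (((k n - 3 : ℕ):ℂ)+3)*lam^((k n - 3)+2)*z n 3
        ∧ W n 3 = lam^((k n - 3)+3) * z n 3 := by
      intro n hn
      have hK : k n = (k n - 3) + 3 := by have := hkn n; omega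
      have hvec : W n = ((jordanBlock 4 lam) ^ ((k n - 3)+3)).mulVec (z n) := by
        rw [hWdef]; rw [← hK]
      rw [hvec, jb_mulVec]
      refine ⟨?_, ?_, ?_⟩
      · rw [Matrix.cons_val_zero]
      · rw [Matrix.cons_val_two]; simp only [Matrix.tail_cons, Matrix.head_cons]
      · rw [Matrix.cons_val_three]; simp only [Matrix.tail_cons, Matrix.head_cons]
    -- y 3 = 0
    have hy3 : y 3 = 0 := by
      refine tendsto_nhds_unique (hwi 3) ?_
      rw [tendsto_zero_iff_norm_tendsto_zero]
      refine Tendsto.congr' ?_ (by simpa only [norm_zero] using (hzi 3).norm)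
      filter_upwards [eventually_ge_atTop 3] with n hn
      rw [(hWform n hn).2.2, norm_mul, hln, one_mul]
    -- y 2 = 0
    have hy2 : y 2 = 0 := by
      have hcoef : Tendsto (fun n => ((k n : ℂ) - 1)*((k n : ℂ) - 2)/(6*(k n : ℂ)^2))
          atTop (𝓝 (1/6)) := by
        have hF : Tendsto (fun m : ℕ => ((m : ℂ) - 1)*((m : ℂ) - 2)/(6*(m : ℂ)^2))
            atTop (𝓝 (1/6)) := by
          have h1 : Tendsto (fun m : ℕ => (1 - (m:ℂ)⁻¹) * (1 - 2*(m:ℂ)⁻¹) * (6:ℂ)⁻¹)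
              atTop (𝓝 ((1 - 0) * (1 - 2*0) * (6:ℂ)⁻¹)) :=
            ((tendsto_const_nhds.sub tendsto_inv_nat_complex).mul
              (tendsto_const_nhds.sub (tendsto_inv_nat_complex.const_mul 2))).mul
              tendsto_const_nhds
          refine Tendsto.congr' ?_ (by simpa [one_div] using h1)
          filter_upwards [eventually_ge_atTop 1] with m hm
          have hm0 : ((m:ℂ)) ≠ 0 := Nat.cast_ne_zero.mpr (by omega)
          have hne : (6:ℂ)*(m:ℂ)^2 ≠ 0 :=
            mul_ne_zero (by norm_num) (pow_ne_zero _ hm0)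
          rw [eq_div_iff hne]
          have hmt : (m:ℂ) * ((m:ℂ))⁻¹ = 1 := mul_inv_cancel₀ hm0
          linear_combination (2*(m:ℂ)*((m:ℂ))⁻¹ - 3*(m:ℂ) + 2) * hmt
        exact hF.comp hk.tendsto_atTop
      have hGA : Tendsto (fun n => (((k n : ℂ) - 1)*((k n : ℂ) - 2)/(6*(k n : ℂ)^2)) * W n 2)
          atTop (𝓝 ((1/6) * y 2)) := hcoef.mul (hwi 2)
      -- the four auxiliary null sequences
      have hS1 : Tendsto (fun n => lam^2 * W n 0 * (((k n : ℂ))⁻¹)^2) atTop (𝓝 0) := by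
        have := ((hwi 0).const_mul (lam^2)).mul (hκinv.pow 2)
        simpa using this
      have hks : ∀ᶠ n in atTop, (1:ℝ) ≤ (k n : ℝ) := by
        filter_upwards [eventually_ge_atTop 1] with n hn
        exact_mod_cast le_trans hn (hkn n)
      have hS2 : Tendsto (fun n => lam^(k n + 2) * z n 0 * (((k n : ℂ))⁻¹)^2) atTop (𝓝 0) := by
        rw [tendsto_zero_iff_norm_tendsto_zero]
        refine squeeze_zero' ?_ ?_ (by simpa only [norm_zero] using (hzi 0).norm)
        · filter_upwards with n using norm_nonneg _
        · filter_upwards [hks] with n hn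
          rw [norm_mul, norm_mul, hln, one_mul, norm_pow, norm_inv, Complex.norm_natCast]
          refine mul_le_of_le_one_right (norm_nonneg _) ?_
          refine pow_le_one₀ (by positivity) ?_
          rw [inv_le_one_iff₀]; right; exact hn
      have hS3 : Tendsto (fun n => lam^(k n + 1) * z n 1 * ((k n : ℂ))⁻¹) atTop (𝓝 0) := by
        rw [tendsto_zero_iff_norm_tendsto_zero]
        refine squeeze_zero' ?_ ?_ (by simpa only [norm_zero] using (hzi 1).norm)
        · filter_upwards with n using norm_nonneg _
        · filter_upwards [hks] with n hn
          rw [norm_mul, norm_mul, hln, one_mul, norm_inv, Complex.norm_natCast]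
          refine mul_le_of_le_one_right (norm_nonneg _) ?_
          rw [inv_le_one_iff₀]; right; exact hn
      have hS4 : Tendsto (fun n => (((k n : ℂ) - 1)*((k n : ℂ) + 1)/(3*(k n : ℂ)^2))
          * lam^(k n) * z n 2) atTop (𝓝 0) := by
        rw [tendsto_zero_iff_norm_tendsto_zero]
        refine squeeze_zero' ?_ ?_ (by simpa only [norm_zero] using (hzi 2).norm)
        · filter_upwards with n using norm_nonneg _
        · filter_upwards [hks] with n hn
          rw [norm_mul, norm_mul, hln, mul_one]
          refine mul_le_of_le_one_left (norm_nonneg _) ?_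
          have hcast : (((k n : ℂ) - 1)*((k n : ℂ) + 1)/(3*(k n : ℂ)^2))
              = (((((k n : ℝ) - 1)*((k n : ℝ) + 1)/(3*(k n : ℝ)^2)) : ℝ) : ℂ) := by
            push_cast; ring
          have hr : (0:ℝ) ≤ ((k n : ℝ) - 1)*((k n : ℝ) + 1)/(3*(k n : ℝ)^2) :=
            div_nonneg (mul_nonneg (by linarith) (by linarith)) (by positivity)
          rw [hcast, Complex.norm_real, Real.norm_eq_abs, abs_of_nonneg hr,
            div_le_one (by positivity)]
          nlinarith [hn]
      have hS : Tendsto (fun n => lam^2 * W n 0 * (((k n : ℂ))⁻¹)^2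
          - lam^(k n + 2) * z n 0 * (((k n : ℂ))⁻¹)^2
          - lam^(k n + 1) * z n 1 * ((k n : ℂ))⁻¹
          - (((k n : ℂ) - 1)*((k n : ℂ) + 1)/(3*(k n : ℂ)^2)) * lam^(k n) * z n 2)
          atTop (𝓝 0) := by
        simpa using ((hS1.sub hS2).sub hS3).sub hS4
      have hGB : Tendsto (fun n => (((k n : ℂ) - 1)*((k n : ℂ) - 2)/(6*(k n : ℂ)^2)) * W n 2)
          atTop (𝓝 0) := by
        refine Tendsto.congr' ?_ hS
        filter_upwards [eventually_ge_atTop 3] with n hn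
        obtain ⟨hW0, hW2, -⟩ := hWform n hn
        have hK : k n = (k n - 3) + 3 := by have := hkn n; omega
        have hκ : ((k n : ℕ) : ℂ) = ((k n - 3 : ℕ) : ℂ) + 3 := by
          rw [hK]; push_cast; ring
        have hκne : ((k n - 3 : ℕ) : ℂ) + 3 ≠ 0 := nadd3_ne _
        rw [hW0, hW2, hκ]
        rw [show k n + 2 = (k n - 3) + 5 by omega, show k n + 1 = (k n - 3) + 4 by omega,
          show k n = (k n - 3) + 3 from hK]
        have htt : (((k n - 3 : ℕ) : ℂ) + 3) * (((k n - 3 : ℕ) : ℂ) + 3)⁻¹ = 1 :=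
          mul_inv_cancel₀ hκne
        simp only [div_eq_mul_inv, mul_inv, ← inv_pow, Nat.add_sub_cancel]
        linear_combination (lam^4 * lam^(k n - 3) * z n 1 * (((k n - 3:ℕ):ℂ)+3)⁻¹) * htt
      have := tendsto_nhds_unique hGA hGB
      have h6 : (1/6 : ℂ) ≠ 0 := by norm_num
      field_simp at this
      simpa using this
    exact ⟨hy2, hy3⟩
  · rintro ⟨hy2, hy3⟩
    set A := ‖y 0‖ + ‖y 1‖ with hA
    set p := pseq lam (y 0) (y 1) with hp
    set q := qseq lam (y 0) (y 1) with hq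
    have hpb := pseq_bound lam (y 0) (y 1) hlam
    have hqb := qseq_bound lam (y 0) (y 1) hlam
    have hqb' : ∀ n : ℕ, ‖q n‖ ≤ 12*A/((n:ℝ)+1) := by
      intro n
      refine le_trans ?_ (hqb n)
      exact le_mul_of_one_le_left (norm_nonneg _)
        (by have := Nat.cast_nonneg (α := ℝ) n; linarith)
    refine ⟨fun n => n + 3, fun n => ![0, 0, p n, q n], fun a b hab => by simpa using hab,
      by norm_num, ?_, ?_⟩
    · rw [tendsto_pi_nhds]
      intro i
      fin_cases i
      · simpa using (tendsto_const_nhds : Tendsto (fun _ : ℕ => (0:ℂ)) atTop (𝓝 0))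
      · simpa using (tendsto_const_nhds : Tendsto (fun _ : ℕ => (0:ℂ)) atTop (𝓝 0))
      · simp only [Pi.zero_apply, Matrix.cons_val_two, Matrix.tail_cons, Matrix.head_cons]
        rw [tendsto_zero_iff_norm_tendsto_zero]
        exact squeeze_zero (fun n => norm_nonneg _) hpb (cdiv_tendsto _)
      · simp only [Pi.zero_apply, Matrix.cons_val_three, Matrix.tail_cons, Matrix.head_cons]
        rw [tendsto_zero_iff_norm_tendsto_zero]
        exact squeeze_zero (fun n => norm_nonneg _) hqb' (cdiv_tendsto _)
    · have hform : ∀ n : ℕ, ((jordanBlock 4 lam) ^ (n+3)).mulVec ![0, 0, p n, q n] =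
          ![((n:ℂ)+3)*((n:ℂ)+2)/2*lam^(n+1)*(p n) + ((n:ℂ)+3)*((n:ℂ)+2)*((n:ℂ)+1)/6*lam^n*(q n),
            ((n:ℂ)+3)*lam^(n+2)*(p n) + ((n:ℂ)+3)*((n:ℂ)+2)/2*lam^(n+1)*(q n),
            lam^(n+3)*(p n) + ((n:ℂ)+3)*lam^(n+2)*(q n),
            lam^(n+3)*(q n)] := by
        intro n
        rw [jb_mulVec]
        ext i
        fin_cases i <;> simp <;> ring
      rw [tendsto_pi_nhds]
      intro i
      fin_cases i
      · have heq : ∀ n : ℕ, ((jordanBlock 4 lam) ^ (n+3)).mulVec ![0, 0, p n, q n] 0 = y 0 := by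
          intro n
          rw [hform n, Matrix.cons_val_zero, hp, hq]
          unfold pseq qseq
          have he : eC n ≠ 0 := eC_ne n
          have hp1 : lam ^ (n+1) ≠ 0 := pow_ne_zero _ hl0
          have hp2 : lam ^ (n+2) ≠ 0 := pow_ne_zero _ hl0
          field_simp
          rw [eC]
          ring
        refine Tendsto.congr (fun n => (heq n).symm) ?_
        exact tendsto_const_nhds
      · have heq : ∀ n : ℕ, ((jordanBlock 4 lam) ^ (n+3)).mulVec ![0, 0, p n, q n] 1 = y 1 := by
          intro n
          rw [hform n, Matrix.cons_val_one, Matrix.cons_val_zero, hp, hq]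
          unfold pseq qseq
          have he : eC n ≠ 0 := eC_ne n
          have hp1 : lam ^ (n+1) ≠ 0 := pow_ne_zero _ hl0
          have hp2 : lam ^ (n+2) ≠ 0 := pow_ne_zero _ hl0
          field_simp
          rw [eC]
          ring
        refine Tendsto.congr (fun n => (heq n).symm) ?_
        exact tendsto_const_nhds
      · show Tendsto (fun n => ((jordanBlock 4 lam) ^ (n+3)).mulVec ![0, 0, p n, q n] 2)
            atTop (𝓝 (y 2))
        rw [hy2]
        rw [tendsto_zero_iff_norm_tendsto_zero]
        refine squeeze_zero (f := fun n : ℕ => ‖((jordanBlock 4 lam) ^ (n+3)).mulVec ![0, 0, p n, q n] 2‖)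
          (g := fun n : ℕ => 12*A/((n:ℝ)+1) + 12*A/((n:ℝ)+1)) (fun n => norm_nonneg _) ?_ ?_
        · intro n
          rw [hform n, Matrix.cons_val_two]
          simp only [Matrix.tail_cons, Matrix.head_cons]
          refine (norm_add_le _ _).trans ?_
          rw [norm_mul, hln, one_mul, norm_mul, norm_mul, norm_nadd3, hln, mul_one]
          exact add_le_add (hpb n) (hqb n)
        · simpa using (cdiv_tendsto (12*A)).add (cdiv_tendsto (12*A))
      · show Tendsto (fun n => ((jordanBlock 4 lam) ^ (n+3)).mulVec ![0, 0, p n, q n] 3)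
            atTop (𝓝 (y 3))
        rw [hy3]
        rw [tendsto_zero_iff_norm_tendsto_zero]
        refine squeeze_zero (f := fun n : ℕ => ‖((jordanBlock 4 lam) ^ (n+3)).mulVec ![0, 0, p n, q n] 3‖)
          (g := fun n : ℕ => 12*A/((n:ℝ)+1)) (fun n => norm_nonneg _) ?_ (cdiv_tendsto _)
        intro n
        rw [hform n, Matrix.cons_val_three]
        simp only [Matrix.tail_cons, Matrix.head_cons]
        rw [norm_mul, hln, one_mul]
        exact hqb' n
end

section
/- Let A be the 3×3 Jordan block over ℂ with eigenvalue λ, |λ| > 1. Then for every y ∈ ℂ³ there exists a sequence (x_n) in ℂ³ with x_n → 0 and A^n x_n → y. In particular J(0) = J^{mix}(0) = ℂ³. -/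
open Filter Topology

lemma jb3 (lam : ℂ) : jordanBlock 3 lam = !![lam,1,0;0,lam,1;0,0,lam] := by
  ext i j
  fin_cases i <;> fin_cases j <;> simp [jordanBlock, Matrix.vecHead, Matrix.vecTail]

noncomputable def Pm (lam : ℂ) (n : ℕ) : Matrix (Fin 3) (Fin 3) ℂ :=
  !![lam^n, n*lam^n/lam, (n.choose 2 : ℂ)*lam^n/lam^2;
     0, lam^n, n*lam^n/lam;
     0, 0, lam^n]

lemma jb_pow_s11 (lam : ℂ) (hl : lam ≠ 0) (n : ℕ) :
    (jordanBlock 3 lam) ^ n = Pm lam n := by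
  induction n with
  | zero => simp [Pm, Matrix.one_fin_three]
  | succ n ih =>
      rw [pow_succ, ih, jb3, Pm, Pm, Matrix.mul_fin_three]
      have h2 : ((n+1).choose 2 : ℂ) = (n : ℂ) + (n.choose 2 : ℂ) := by
        rw [Nat.choose_succ_succ]
        push_cast [Nat.choose_one_right]
        ring
      ext i j
      fin_cases i <;> fin_cases j <;>
        simp [Matrix.vecHead, Matrix.vecTail, h2] <;> first | rfl | (field_simp; ring)

lemma tendsto_aux (r a b c : ℂ) (hr : ‖r‖ < 1) :
    Tendsto (fun n : ℕ => (a + b*(n:ℂ) + c*(n:ℂ)^2) * r^n) atTop (𝓝 0) := by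
  have h0 : Tendsto (fun n : ℕ => r^n) atTop (𝓝 0) :=
    tendsto_pow_atTop_nhds_zero_of_norm_lt_one hr
  have h1 : Tendsto (fun n : ℕ => (n:ℂ)^1 * r^n) atTop (𝓝 0) :=
    ((summable_norm_pow_mul_geometric_of_norm_lt_one 1 hr).of_norm).tendsto_atTop_zero
  have h2 : Tendsto (fun n : ℕ => (n:ℂ)^2 * r^n) atTop (𝓝 0) :=
    ((summable_norm_pow_mul_geometric_of_norm_lt_one 2 hr).of_norm).tendsto_atTop_zero
  have h := ((h0.const_mul a).add (h1.const_mul b)).add (h2.const_mul c)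
  simp only [mul_zero, add_zero] at h
  exact h.congr fun n => by ring

theorem stmt11 (lam : ℂ) (hlam : 1 < ‖lam‖) :
    (∀ y : Fin 3 → ℂ, ∃ z : ℕ → Fin 3 → ℂ, Tendsto z atTop (𝓝 0) ∧
      Tendsto (fun n => ((jordanBlock 3 lam) ^ n).mulVec (z n)) atTop (𝓝 y)) ∧
    matJ (jordanBlock 3 lam) 0 = Set.univ ∧
    matJmix (jordanBlock 3 lam) 0 = Set.univ := by
  have hl0 : lam ≠ 0 := by
    intro h; rw [h] at hlam; simp at hlam; linarith
  have hr : ‖(lam⁻¹ : ℂ)‖ < 1 := by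
    rw [norm_inv]
    rw [inv_lt_one_iff₀]
    right
    exact hlam
  -- main construction
  have key : ∀ y : Fin 3 → ℂ, ∃ z : ℕ → Fin 3 → ℂ, Tendsto z atTop (𝓝 0) ∧
      ∀ n, ((jordanBlock 3 lam) ^ n).mulVec (z n) = y := by
    intro y
    refine ⟨fun n => ![(y 0 - n * y 1 / lam + ((n:ℂ)^2 - (n.choose 2:ℂ)) * y 2 / lam^2) / lam^n,
            (y 1 - n * y 2 / lam) / lam^n, y 2 / lam^n], ?_, ?_⟩
    · rw [tendsto_pi_nhds]
      intro i
      fin_cases i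
      · have : (fun n : ℕ => (y 0 - n * y 1 / lam + ((n:ℂ)^2 - (n.choose 2:ℂ)) * y 2 / lam^2) / lam^n)
            = fun n : ℕ => (y 0 + (-(y 1)/lam + y 2/(2*lam^2))*(n:ℂ) + (y 2/(2*lam^2))*(n:ℂ)^2) * (lam⁻¹)^n := by
          funext n
          have hpn : lam ^ n ≠ 0 := pow_ne_zero _ hl0
          rw [Nat.cast_choose_two, inv_pow, ← div_eq_mul_inv]
          congr 1
          ring
        simpa [this] using tendsto_aux lam⁻¹ (y 0) (-(y 1)/lam + y 2/(2*lam^2)) (y 2/(2*lam^2)) hr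
      · have : (fun n : ℕ => (y 1 - n * y 2 / lam) / lam^n)
            = fun n : ℕ => (y 1 + (-(y 2)/lam)*(n:ℂ) + 0*(n:ℂ)^2) * (lam⁻¹)^n := by
          funext n
          rw [div_eq_mul_inv, ← inv_pow]
          field_simp
          ring
        simpa [this] using tendsto_aux lam⁻¹ (y 1) (-(y 2)/lam) 0 hr
      · have : (fun n : ℕ => y 2 / lam^n)
            = fun n : ℕ => (y 2 + 0*(n:ℂ) + 0*(n:ℂ)^2) * (lam⁻¹)^n := by
          funext n
          rw [div_eq_mul_inv, ← inv_pow]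
          ring
        simpa [this] using tendsto_aux lam⁻¹ (y 2) 0 0 hr
    · intro n
      have hpn : lam ^ n ≠ 0 := pow_ne_zero _ hl0
      have e : ∀ x : ℂ, lam^n * (x / lam^n) = x := fun x => mul_div_cancel₀ x hpn
      have r1 : ∀ a x : ℂ, (a*lam^n/lam) * (x/lam^n) = (a/lam) * (lam^n * (x/lam^n)) :=
        fun a x => by ring
      have r2 : ∀ a x : ℂ, (a*lam^n/lam^2) * (x/lam^n) = (a/lam^2) * (lam^n * (x/lam^n)) :=
        fun a x => by ring
      rw [jb_pow_s11 lam hl0]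
      ext i
      fin_cases i
      · simp [Pm, Matrix.mulVec, dotProduct, Fin.sum_univ_three]
        rw [r1, r2, e, e, e]
        ring
      · simp [Pm, Matrix.mulVec, dotProduct, Fin.sum_univ_three]
        rw [r1, e, e]
        ring
      · simp [Pm, Matrix.mulVec, dotProduct, Fin.sum_univ_three]
        rw [e]
  refine ⟨?_, ?_, ?_⟩
  · intro y
    obtain ⟨z, hz, he⟩ := key y
    exact ⟨z, hz, by simpa [funext fun n => he n] using (tendsto_const_nhds : Tendsto (fun _ : ℕ => y) atTop (𝓝 y))⟩
  · ext y
    simp only [Set.mem_univ, iff_true, matJ, Set.mem_setOf_eq]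
    obtain ⟨z, hz, he⟩ := key y
    refine ⟨fun n => n + 1, fun n => z (n + 1), fun a b h => by simpa using h, by norm_num, ?_, ?_⟩
    · exact hz.comp (tendsto_add_atTop_nat 1)
    · simpa [funext fun n => he (n+1)] using (tendsto_const_nhds : Tendsto (fun _ : ℕ => y) atTop (𝓝 y))
  · ext y
    simp only [Set.mem_univ, iff_true, matJmix, Set.mem_setOf_eq]
    obtain ⟨z, hz, he⟩ := key y
    exact ⟨z, hz, by simpa [funext fun n => he n] using (tendsto_const_nhds : Tendsto (fun _ : ℕ => y) atTop (𝓝 y))⟩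
end

section
/- Let B : ℂ^l → ℂ^l be a linear map all of whose eigenvalues have modulus greater than 1. Then J(0) = ℂ^l, i.e., every vector of ℂ^l belongs to the extended limit set of the zero vector under B. -/
open Filter Topology NNReal ENNReal

section Aux

attribute [local instance] Matrix.linftyOpNormedRing Matrix.linftyOpNormedAlgebra

private theorem aux_pow_norm_tendsto_zero {l : ℕ} (C : Matrix (Fin l) (Fin l) ℂ)
    (h : spectralRadius ℂ C < 1) :
    Tendsto (fun n : ℕ => ‖C ^ n‖) atTop (𝓝 0) := by
  obtain ⟨t, ht1, ht2⟩ := exists_between h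
  have htn : t ≠ ⊤ := (ht2.trans ENNReal.one_lt_top).ne
  set c : ℝ≥0 := t.toNNReal with hc
  have hct : (c : ℝ≥0∞) = t := ENNReal.coe_toNNReal htn
  have hc1 : (c : ℝ) < 1 := by
    have := ht2; rw [← hct] at this; exact_mod_cast this
  have hgel := spectrum.pow_nnnorm_pow_one_div_tendsto_nhds_spectralRadius C
  have hev : ∀ᶠ n : ℕ in atTop, (‖C ^ n‖₊ : ℝ≥0∞) ^ (1 / (n:ℝ)) < (c : ℝ≥0∞) := by
    rw [hct]; exact hgel.eventually_lt_const ht1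
  have hbound : ∀ᶠ n : ℕ in atTop, ‖C ^ n‖ ≤ (c:ℝ) ^ n := by
    filter_upwards [hev, eventually_ge_atTop 1] with n hn hn1
    have hne : (n:ℝ) ≠ 0 := Nat.cast_ne_zero.mpr (by omega)
    have h2 : ((‖C ^ n‖₊ : ℝ≥0∞) ^ (1 / (n:ℝ))) ^ (n:ℝ) < (c : ℝ≥0∞) ^ (n:ℝ) :=
      ENNReal.rpow_lt_rpow hn (by positivity)
    rw [← ENNReal.rpow_mul, one_div, inv_mul_cancel₀ hne, ENNReal.rpow_one,
      ENNReal.rpow_natCast] at h2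
    have h3 : ‖C ^ n‖₊ < c ^ n := by exact_mod_cast h2
    calc ‖C ^ n‖ ≤ ((c ^ n : ℝ≥0) : ℝ) := le_of_lt h3
      _ = (c:ℝ) ^ n := by push_cast; ring
  exact squeeze_zero' (Eventually.of_forall fun n => norm_nonneg _) hbound
    (tendsto_pow_atTop_nhds_zero_of_lt_one (by positivity) hc1)

private theorem aux_main {l : ℕ} (hl : 0 < l) (B : Matrix (Fin l) (Fin l) ℂ)
    (hB : ∀ μ ∈ spectrum ℂ B, 1 < ‖μ‖) (y : Fin l → ℂ) :
    y ∈ matJ B 0 := by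
  haveI : Nonempty (Fin l) := ⟨⟨0, hl⟩⟩
  have h0 : (0:ℂ) ∉ spectrum ℂ B := fun h => by have := hB 0 h; simp at this; exact absurd this (by norm_num)
  have hU : IsUnit B := by
    have := (spectrum.zero_notMem_iff ℂ (a := B))
    exact this.mp h0
  set u : (Matrix (Fin l) (Fin l) ℂ)ˣ := hU.unit with hu
  set C : Matrix (Fin l) (Fin l) ℂ := ((u⁻¹ : (Matrix (Fin l) (Fin l) ℂ)ˣ) : Matrix (Fin l) (Fin l) ℂ) with hC
  have hspec : ∀ z ∈ spectrum ℂ C, ‖z‖₊ < 1 := by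
    intro z hz
    rw [hC, ← spectrum.map_inv, Set.mem_inv] at hz
    rw [hU.unit_spec] at hz
    have h1 := hB _ hz
    have hz0 : z ≠ 0 := by
      intro h; rw [h] at h1; simp at h1; exact absurd h1 (by norm_num)
    have : ‖z‖ < 1 := by
      have hinv : 1 < ‖z‖⁻¹ := by
        rw [← norm_inv]
        simpa using h1
      exact (one_lt_inv₀ (norm_pos_iff.mpr hz0)).mp hinv
    exact_mod_cast this
  have hrad : spectralRadius ℂ C < 1 := by
    simpa using spectrum.spectralRadius_lt_of_forall_lt C (r := 1) hspec
  have hpow := aux_pow_norm_tendsto_zero C hrad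
  set z : ℕ → Fin l → ℂ := fun n => (C ^ (n+1)).mulVec y with hz
  have key : ∀ n : ℕ, (B ^ (n+1)).mulVec (z n) = y := by
    intro n
    rw [hz, Matrix.mulVec_mulVec]
    have hone : B ^ (n+1) * C ^ (n+1) = 1 := by
      rw [hC, ← hU.unit_spec]
      rw [← Units.val_pow_eq_pow_val, ← Units.val_pow_eq_pow_val, ← Units.val_mul,
        inv_pow]
      simp [hu]
    rw [hone, Matrix.one_mulVec]
  have hz0 : Tendsto z atTop (𝓝 0) := by
    rw [tendsto_zero_iff_norm_tendsto_zero]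
    refine squeeze_zero (fun n => norm_nonneg _)
      (fun n => Matrix.linfty_opNorm_mulVec _ _) ?_
    have : Tendsto (fun n : ℕ => ‖C ^ (n+1)‖ * ‖y‖) atTop (𝓝 (0 * ‖y‖)) :=
      Tendsto.mul_const _ (hpow.comp (tendsto_add_atTop_nat 1))
    simpa using this
  refine ⟨fun n => n + 1, z, fun a b h => Nat.add_lt_add_right h 1, Nat.one_pos, hz0, ?_⟩
  have : (fun n => (B ^ (n+1)).mulVec (z n)) = fun _ => y := funext key
  rw [this]
  exact tendsto_const_nhds

theorem stmt13 (l : ℕ) (B : Matrix (Fin l) (Fin l) ℂ)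
    (hB : ∀ μ ∈ spectrum ℂ B, 1 < ‖μ‖) :
    matJ B 0 = Set.univ := by
  ext y
  simp only [Set.mem_univ, iff_true]
  rcases Nat.eq_zero_or_pos l with hl | hl
  · subst hl
    have hy : y = 0 := Subsingleton.elim _ _
    refine ⟨fun n => n + 1, fun _ => 0, fun a b h => Nat.add_lt_add_right h 1, Nat.one_pos,
      tendsto_const_nhds, ?_⟩
    simpa [Matrix.mulVec_zero, hy] using (tendsto_const_nhds : Tendsto (fun _ : ℕ => (0 : Fin 0 → ℂ)) atTop (𝓝 0))
  · exact aux_main hl B hB y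

end Aux
end

section
/- Let A be the l×l Jordan block over ℂ with eigenvalue λ, |λ| = 1, where l = 2r, and let x ∈ ℂ^l. Then J(x) is nonempty if and only if x_{r+1} = ⋯ = x_l = 0, and in this case J(x) = ℂ^r × {0}^r. -/
open Filter Topology

section JordanAux
open Finset

lemma jordanBlock_pow (l : ℕ) (lam : ℂ) (hlam : lam ≠ 0) (k : ℕ) :
    (jordanBlock l lam) ^ k = Matrix.of (fun i j : Fin l =>
      if (i:ℕ) ≤ (j:ℕ) then (Nat.choose k ((j:ℕ) - (i:ℕ)) : ℂ) * lam ^ k * lam⁻¹ ^ ((j:ℕ) - (i:ℕ)) else 0) := by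
  induction k with
  | zero =>
    ext i j
    simp only [pow_zero, Matrix.one_apply, Matrix.of_apply, Nat.choose_zero_succ]
    by_cases h : i = j
    · subst h; simp
    · have hne : (i:ℕ) ≠ (j:ℕ) := fun hh => h (Fin.ext hh)
      rw [if_neg h]
      rcases le_or_gt (i:ℕ) (j:ℕ) with hle | hlt
      · rw [if_pos hle]
        have hd : (j:ℕ) - (i:ℕ) ≠ 0 := by omega
        rcases Nat.exists_eq_succ_of_ne_zero hd with ⟨d, hdd⟩
        rw [hdd]
        simp
      · rw [if_neg (by omega)]
  | succ k ih =>
    rw [pow_succ, ih]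
    ext i j
    rw [Matrix.mul_apply]
    have hsummand : ∀ t : Fin l,
        (Matrix.of (fun i j : Fin l =>
          if (i:ℕ) ≤ (j:ℕ) then (Nat.choose k ((j:ℕ) - (i:ℕ)) : ℂ) * lam ^ k * lam⁻¹ ^ ((j:ℕ) - (i:ℕ)) else 0)) i t
          * jordanBlock l lam t j
        = (if t = j then (if (i:ℕ) ≤ (j:ℕ) then (Nat.choose k ((j:ℕ) - (i:ℕ)) : ℂ) * lam ^ k * lam⁻¹ ^ ((j:ℕ) - (i:ℕ)) else 0) * lam else 0)
          + (if (j:ℕ) = (t:ℕ) + 1 then (if (i:ℕ) ≤ (t:ℕ) then (Nat.choose k ((t:ℕ) - (i:ℕ)) : ℂ) * lam ^ k * lam⁻¹ ^ ((t:ℕ) - (i:ℕ)) else 0) else 0) := by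
      intro t
      simp only [jordanBlock, Matrix.of_apply]
      rcases eq_or_ne j t with h1 | h1
      · subst h1
        rw [if_pos rfl, if_pos rfl, if_neg (show ¬ ((j:ℕ) = (j:ℕ) + 1) by omega), add_zero]
      · rw [if_neg h1, if_neg (show ¬ t = j from fun hh => h1 hh.symm), zero_add]
        by_cases h2 : (j:ℕ) = (t:ℕ) + 1
        · rw [if_pos h2, if_pos h2, mul_one]
        · rw [if_neg h2, if_neg h2, mul_zero]
    rw [Finset.sum_congr rfl (fun t _ => hsummand t), Finset.sum_add_distrib]
    rw [Finset.sum_ite_eq' Finset.univ j]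
    rw [if_pos (Finset.mem_univ j)]
    have hsecond : (∑ t : Fin l, if (j:ℕ) = (t:ℕ) + 1 then (if (i:ℕ) ≤ (t:ℕ) then (Nat.choose k ((t:ℕ) - (i:ℕ)) : ℂ) * lam ^ k * lam⁻¹ ^ ((t:ℕ) - (i:ℕ)) else 0) else 0)
        = if h : 1 ≤ (j:ℕ) then (if (i:ℕ) ≤ (j:ℕ) - 1 then (Nat.choose k ((j:ℕ) - 1 - (i:ℕ)) : ℂ) * lam ^ k * lam⁻¹ ^ ((j:ℕ) - 1 - (i:ℕ)) else 0) else 0 := by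
      by_cases hj : 1 ≤ (j:ℕ)
      · rw [dif_pos hj]
        have hjl : (j:ℕ) - 1 < l := by omega
        have : ∀ t : Fin l, ((j:ℕ) = (t:ℕ) + 1) ↔ t = ⟨(j:ℕ) - 1, hjl⟩ := by
          intro t; constructor
          · intro h; apply Fin.ext; simp; omega
          · intro h; subst h; simp; omega
        rw [Finset.sum_congr rfl (fun t _ => by rw [if_congr (this t) rfl rfl])]
        rw [Finset.sum_ite_eq' Finset.univ]
        simp
      · rw [dif_neg hj]
        apply Finset.sum_eq_zero
        intro t _
        rw [if_neg (by omega)]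
    rw [hsecond]
    rw [Matrix.of_apply]
    by_cases hij : (i:ℕ) ≤ (j:ℕ)
    · rcases eq_or_lt_of_le hij with heq | hlt
      · rw [if_pos hij]
        have hj1 : ¬ ((i:ℕ) ≤ (j:ℕ) - 1) ∨ ¬ (1 ≤ (j:ℕ)) := by omega
        have h2 : (if h : 1 ≤ (j:ℕ) then (if (i:ℕ) ≤ (j:ℕ) - 1 then (Nat.choose k ((j:ℕ) - 1 - (i:ℕ)) : ℂ) * lam ^ k * lam⁻¹ ^ ((j:ℕ) - 1 - (i:ℕ)) else 0) else 0) = 0 := by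
          rcases hj1 with h | h
          · by_cases hj : 1 ≤ (j:ℕ)
            · rw [dif_pos hj, if_neg h]
            · rw [dif_neg hj]
          · rw [dif_neg h]
        rw [h2, add_zero, if_pos hij, ← heq]
        simp [pow_succ]
      · rw [if_pos hij, if_pos hij]
        have hj : 1 ≤ (j:ℕ) := by omega
        rw [dif_pos hj, if_pos (by omega : (i:ℕ) ≤ (j:ℕ) - 1)]
        have hd : (j:ℕ) - (i:ℕ) = ((j:ℕ) - 1 - (i:ℕ)) + 1 := by omega
        rw [hd, Nat.choose_succ_succ']
        push_cast
        rw [pow_succ, pow_succ]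
        have : lam * lam⁻¹ = 1 := mul_inv_cancel₀ hlam
        field_simp
        ring
    · rw [if_neg hij, if_neg hij]
      have : ¬ ((i:ℕ) ≤ (j:ℕ) - 1) := by omega
      by_cases hj : 1 ≤ (j:ℕ)
      · rw [dif_pos hj, if_neg this]; simp
      · rw [dif_neg hj]; simp

def padVec {l : ℕ} (v : Fin l → ℂ) (n : ℕ) : ℂ := if h : n < l then v ⟨n, h⟩ else 0

lemma padVec_eq_zero {l : ℕ} (v : Fin l → ℂ) (n : ℕ) (h : l ≤ n) : padVec v n = 0 := by
  rw [padVec, dif_neg (by omega)]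

lemma mulVec_jordan_pow (l : ℕ) (lam : ℂ) (hlam : lam ≠ 0) (k : ℕ) (v : Fin l → ℂ) (i : Fin l) :
    ((jordanBlock l lam ^ k).mulVec v) i
      = ∑ j ∈ Finset.range l, (Nat.choose k j : ℂ) * lam ^ k * lam⁻¹ ^ j * padVec v ((i:ℕ) + j) := by
  rw [jordanBlock_pow l lam hlam k]
  have hmv : ((Matrix.of (fun i j : Fin l =>
      if (i:ℕ) ≤ (j:ℕ) then (Nat.choose k ((j:ℕ) - (i:ℕ)) : ℂ) * lam ^ k * lam⁻¹ ^ ((j:ℕ) - (i:ℕ)) else 0)).mulVec v) i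
      = ∑ t : Fin l, (if (i:ℕ) ≤ (t:ℕ) then (Nat.choose k ((t:ℕ) - (i:ℕ)) : ℂ) * lam ^ k * lam⁻¹ ^ ((t:ℕ) - (i:ℕ)) * padVec v (t:ℕ) else 0) := by
    rw [Matrix.mulVec, dotProduct]
    apply Finset.sum_congr rfl
    intro t _
    rw [Matrix.of_apply, ite_mul, zero_mul]
    congr 1
    rw [padVec, dif_pos t.isLt]
  rw [hmv]
  rw [Fin.sum_univ_eq_sum_range (fun n =>
    (if (i:ℕ) ≤ n then (Nat.choose k (n - (i:ℕ)) : ℂ) * lam ^ k * lam⁻¹ ^ (n - (i:ℕ)) * padVec v n else 0)) l]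
  rw [Finset.range_eq_Ico, ← Finset.sum_Ico_consecutive _ (Nat.zero_le (i:ℕ)) (le_of_lt i.isLt)]
  rw [Finset.sum_eq_zero (fun n hn => by
    rw [if_neg]
    intro hh
    have := (Finset.mem_Ico.mp hn).2
    omega), zero_add]
  rw [Finset.sum_Ico_eq_sum_range]
  have h1 : ∀ j, (if (i:ℕ) ≤ (i:ℕ) + j then (Nat.choose k (((i:ℕ) + j) - (i:ℕ)) : ℂ) * lam ^ k * lam⁻¹ ^ (((i:ℕ)+j) - (i:ℕ)) * padVec v ((i:ℕ)+j) else 0)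
      = (Nat.choose k j : ℂ) * lam ^ k * lam⁻¹ ^ j * padVec v ((i:ℕ)+j) := by
    intro j
    rw [if_pos (Nat.le_add_right _ _)]
    have hj : (i:ℕ) + j - (i:ℕ) = j := by omega
    rw [hj]
  rw [Finset.sum_congr rfl (fun j _ => h1 j)]
  have h3 : ∑ n ∈ Finset.Ico (l - (i:ℕ)) l, (Nat.choose k n : ℂ) * lam ^ k * lam⁻¹ ^ n * padVec v ((i:ℕ) + n) = 0 := by
    apply Finset.sum_eq_zero
    intro n hn
    rw [padVec_eq_zero v _ (by have := (Finset.mem_Ico.mp hn).1; omega), mul_zero]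
  have hsplit := Finset.sum_Ico_consecutive (fun n => (Nat.choose k n : ℂ) * lam ^ k * lam⁻¹ ^ n * padVec v ((i:ℕ) + n))
    (Nat.zero_le (l - (i:ℕ))) (by omega : l - (i:ℕ) ≤ l)
  rw [Finset.range_eq_Ico, ← hsplit, h3, add_zero]

lemma tendsto_choose_div_pow (n : ℕ) :
    Tendsto (fun k : ℕ => (Nat.choose k n : ℝ) / (k:ℝ)^n) atTop (𝓝 ((n.factorial : ℝ)⁻¹)) := by
  have hinv : Tendsto (fun k : ℕ => ((k:ℝ))⁻¹) atTop (𝓝 0) :=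
    Tendsto.inv_tendsto_atTop tendsto_natCast_atTop_atTop
  have h1 : Tendsto (fun k : ℕ => (n.factorial : ℝ)⁻¹ * ∏ i ∈ Finset.range n, (1 - (i:ℝ)*((k:ℝ))⁻¹)) atTop
      (𝓝 ((n.factorial:ℝ)⁻¹ * ∏ _i ∈ Finset.range n, (1:ℝ))) := by
    apply Tendsto.const_mul
    apply tendsto_finset_prod
    intro i _
    simpa using tendsto_const_nhds.sub (hinv.const_mul (i:ℝ))
  simp only [Finset.prod_const_one, mul_one] at h1
  apply Tendsto.congr' _ h1
  filter_upwards [eventually_ge_atTop (max n 1)] with k hk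
  have hkn : n ≤ k := le_trans (le_max_left _ _) hk
  have hk1 : (1:ℕ) ≤ k := le_trans (le_max_right _ _) hk
  have hk0 : (k:ℝ) ≠ 0 := by
    simp only [ne_eq, Nat.cast_eq_zero]; omega
  have hfac : ∀ i ∈ Finset.range n, (1 - (i:ℝ)*((k:ℝ))⁻¹) = ((k - i : ℕ) : ℝ) / (k:ℝ) := by
    intro i hi
    have hik : i ≤ k := le_trans (le_of_lt (Finset.mem_range.mp hi)) hkn
    rw [Nat.cast_sub hik]
    field_simp
  rw [Finset.prod_congr rfl hfac, Finset.prod_div_distrib, Finset.prod_const]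
  have hdesc : ∏ i ∈ Finset.range n, ((k - i : ℕ) : ℝ) = (k.descFactorial n : ℝ) := by
    rw [Nat.descFactorial_eq_prod_range]
    push_cast
    rfl
  rw [hdesc, Finset.card_range]
  have : (k.descFactorial n : ℝ) = (n.factorial : ℝ) * (Nat.choose k n : ℝ) := by
    rw [← Nat.cast_mul, Nat.descFactorial_eq_factorial_mul_choose]
  rw [this]
  have hnf : (n.factorial : ℝ) ≠ 0 := Nat.cast_ne_zero.mpr (Nat.factorial_ne_zero n)
  field_simp

lemma tendsto_choose_div_pow_complex (n : ℕ) :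
    Tendsto (fun k : ℕ => (Nat.choose k n : ℂ) * ((k:ℂ)⁻¹)^n) atTop (𝓝 ((n.factorial : ℂ)⁻¹)) := by
  have h : Tendsto (fun k : ℕ => ((((Nat.choose k n : ℝ) / (k:ℝ)^n) : ℝ) : ℂ)) atTop
      (𝓝 (((n.factorial : ℝ)⁻¹ : ℝ) : ℂ)) :=
    (Complex.continuous_ofReal.tendsto _).comp (tendsto_choose_div_pow n)
  have heq : ∀ k : ℕ, ((((Nat.choose k n : ℝ) / (k:ℝ)^n) : ℝ) : ℂ) = (Nat.choose k n : ℂ) * ((k:ℂ)⁻¹)^n := by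
    intro k
    push_cast
    rw [div_eq_mul_inv, inv_pow]
  have hlim : (((n.factorial : ℝ)⁻¹ : ℝ) : ℂ) = ((n.factorial : ℂ))⁻¹ := by push_cast; rfl
  rw [← hlim]
  exact Tendsto.congr (fun k => heq k) h

noncomputable def Hmat (r : ℕ) (lam : ℂ) (k : ℕ) : Matrix (Fin r) (Fin r) ℂ :=
  Matrix.of fun i m => (Nat.choose k (r - (i:ℕ) + (m:ℕ)) : ℂ)
    * ((k:ℂ)⁻¹) ^ (r - (i:ℕ) + (m:ℕ)) * (lam⁻¹) ^ (r - (i:ℕ) + (m:ℕ))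

noncomputable def Hlim (r : ℕ) (lam : ℂ) : Matrix (Fin r) (Fin r) ℂ :=
  Matrix.of fun i m => (((r - (i:ℕ) + (m:ℕ)).factorial : ℂ))⁻¹ * (lam⁻¹) ^ (r - (i:ℕ) + (m:ℕ))

lemma Hlim_det_ne_zero (r : ℕ) (lam : ℂ) (hlam : lam ≠ 0) : (Hlim r lam).det ≠ 0 := by
  intro hdet
  obtain ⟨v, hv0, hv⟩ := Matrix.exists_mulVec_eq_zero_iff.mpr hdet
  rcases Nat.eq_zero_or_pos r with hr | hr
  · subst hr
    exact hv0 (funext fun m => m.elim0)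
  -- the scaled vector
  set d : Fin r → ℂ := fun m => (lam⁻¹) ^ (m:ℕ) * v m with hd
  have hlaminv : lam⁻¹ ≠ 0 := inv_ne_zero hlam
  -- the equations
  have heq : ∀ i : Fin r, ∑ m : Fin r, d m * (((r + (m:ℕ) - (i:ℕ)).factorial : ℂ))⁻¹ = 0 := by
    intro i
    have h1 : (Hlim r lam).mulVec v i = 0 := by rw [hv]; rfl
    rw [Matrix.mulVec, dotProduct] at h1
    have h2 : ∀ m : Fin r, Hlim r lam i m * v m
        = (lam⁻¹)^(r - (i:ℕ)) * (d m * (((r + (m:ℕ) - (i:ℕ)).factorial : ℂ))⁻¹) := by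
      intro m
      simp only [Hlim, Matrix.of_apply, hd]
      have hexp : r - (i:ℕ) + (m:ℕ) = r + (m:ℕ) - (i:ℕ) := by omega
      rw [← hexp, pow_add]
      ring
    rw [Finset.sum_congr rfl (fun m _ => h2 m), ← Finset.mul_sum] at h1
    exact (mul_eq_zero.mp h1).resolve_left (pow_ne_zero _ hlaminv)
  -- nonzero coefficient
  obtain ⟨m₀, hm₀⟩ := Function.ne_iff.mp hv0
  have hdm₀ : d m₀ ≠ 0 := by
    simp only [hd]
    exact mul_ne_zero (pow_ne_zero _ hlaminv) hm₀
  -- the polynomial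
  set f : Polynomial ℂ := ∑ m : Fin r, Polynomial.monomial (r + (m:ℕ)) (d m * (((r + (m:ℕ)).factorial : ℂ))⁻¹) with hf
  have hfac_ne : ∀ n : ℕ, ((n.factorial : ℂ)) ≠ 0 := fun n => Nat.cast_ne_zero.mpr (Nat.factorial_ne_zero n)
  have hcoeff : ∀ m : Fin r, f.coeff (r + (m:ℕ)) = d m * (((r + (m:ℕ)).factorial : ℂ))⁻¹ := by
    intro m
    rw [hf, Polynomial.finset_sum_coeff]
    rw [Finset.sum_eq_single m]
    · rw [Polynomial.coeff_monomial, if_pos rfl]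
    · intro m' _ hm'
      rw [Polynomial.coeff_monomial, if_neg (by
        intro hh
        exact hm' (Fin.ext (by omega)))]
    · intro hmem
      exact absurd (Finset.mem_univ m) hmem
  have hf0 : f ≠ 0 := by
    intro hzero
    have := hcoeff m₀
    rw [hzero, Polynomial.coeff_zero] at this
    exact hdm₀ (by
      have := this.symm
      rcases mul_eq_zero.mp this with h | h
      · exact h
      · exact absurd h (inv_ne_zero (hfac_ne _)))
  have hdeg : f.natDegree ≤ 2*r - 1 := by
    rw [hf]
    apply Polynomial.natDegree_sum_le_of_forall_le
    intro m _
    exact le_trans (Polynomial.natDegree_monomial_le _) (by omega)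
  -- X^r divides f
  have hdvd1 : Polynomial.X ^ r ∣ f := by
    rw [Polynomial.X_pow_dvd_iff]
    intro e he
    rw [hf, Polynomial.finset_sum_coeff]
    apply Finset.sum_eq_zero
    intro m _
    rw [Polynomial.coeff_monomial, if_neg (by omega)]
  -- hasse derivatives vanish at 1
  have hhasse : ∀ i : Fin r, (Polynomial.hasseDeriv (i:ℕ) f).eval 1 = 0 := by
    intro i
    rw [hf, map_sum, Polynomial.eval_finset_sum]
    have hterm : ∀ m : Fin r,
        Polynomial.eval 1 ((Polynomial.hasseDeriv (i:ℕ)) (Polynomial.monomial (r + (m:ℕ)) (d m * (((r + (m:ℕ)).factorial : ℂ))⁻¹)))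
        = ((i:ℕ).factorial : ℂ)⁻¹ * (d m * (((r + (m:ℕ) - (i:ℕ)).factorial : ℂ))⁻¹) := by
      intro m
      rw [Polynomial.hasseDeriv_monomial, Polynomial.eval_monomial, one_pow, mul_one]
      have hle : (i:ℕ) ≤ r + (m:ℕ) := by omega
      have hch := Nat.choose_mul_factorial_mul_factorial hle
      have hch' : ((r + (m:ℕ)).choose (i:ℕ) : ℂ) * ((i:ℕ).factorial : ℂ) * (((r + (m:ℕ) - (i:ℕ)).factorial : ℂ)) = (((r + (m:ℕ)).factorial : ℂ)) := by
        exact_mod_cast congrArg (Nat.cast : ℕ → ℂ) hch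
      field_simp [hfac_ne]
      linear_combination (lam⁻¹ ^ (m:ℕ) * v m) * hch'
    rw [Finset.sum_congr rfl (fun m _ => hterm m), ← Finset.mul_sum, heq i, mul_zero]
  -- (X - 1)^r divides f
  have hdvd2 : (Polynomial.X - Polynomial.C 1) ^ r ∣ f := by
    have hg : Polynomial.X ^ r ∣ f.comp (Polynomial.X + Polynomial.C 1) := by
      rw [Polynomial.X_pow_dvd_iff]
      intro e he
      have : (f.comp (Polynomial.X + Polynomial.C 1)).coeff e = ((Polynomial.taylor 1) f).coeff e := by
        rw [Polynomial.taylor_apply]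
      rw [this, Polynomial.taylor_coeff]
      exact hhasse ⟨e, he⟩
    obtain ⟨q, hq⟩ := hg
    refine ⟨q.comp (Polynomial.X - Polynomial.C 1), ?_⟩
    have : f = (f.comp (Polynomial.X + Polynomial.C 1)).comp (Polynomial.X - Polynomial.C 1) := by
      rw [Polynomial.comp_assoc]
      simp
    rw [this, hq, Polynomial.mul_comp, Polynomial.pow_comp, Polynomial.X_comp]
  have hcop : IsCoprime (Polynomial.X ^ r) ((Polynomial.X - Polynomial.C 1) ^ r : Polynomial ℂ) := by
    apply IsCoprime.pow
    refine ⟨1, -1, ?_⟩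
    simp
  have hdvd := hcop.mul_dvd hdvd1 hdvd2
  have hdeg2 := Polynomial.natDegree_le_of_dvd hdvd hf0
  rw [Polynomial.natDegree_mul (pow_ne_zero _ Polynomial.X_ne_zero) (pow_ne_zero _ (Polynomial.X_sub_C_ne_zero 1)),
    Polynomial.natDegree_X_pow, Polynomial.natDegree_pow, Polynomial.natDegree_X_sub_C] at hdeg2
  omega

lemma tendsto_Hmat (r : ℕ) (lam : ℂ) :
    Tendsto (fun k => Hmat r lam k) atTop (𝓝 (Hlim r lam)) := by
  apply tendsto_pi_nhds.mpr
  intro i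
  rw [tendsto_pi_nhds]
  intro m
  have h := (tendsto_choose_div_pow_complex (r - (i:ℕ) + (m:ℕ))).mul_const ((lam⁻¹)^(r - (i:ℕ) + (m:ℕ)))
  simpa [Hmat, Hlim] using h

lemma mulVec_solution {r : ℕ} (M : Matrix (Fin r) (Fin r) ℂ) (hdet : M.det ≠ 0) (b : Fin r → ℂ) :
    M.mulVec ((M.det)⁻¹ • (M.adjugate.mulVec b)) = b := by
  rw [Matrix.mulVec_smul, Matrix.mulVec_mulVec, Matrix.mul_adjugate, Matrix.smul_mulVec,
    Matrix.one_mulVec, smul_smul, inv_mul_cancel₀ hdet, one_smul]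

lemma solution_unique {r : ℕ} (M : Matrix (Fin r) (Fin r) ℂ) (hdet : M.det ≠ 0) {b p : Fin r → ℂ}
    (h : M.mulVec p = b) : p = (M.det)⁻¹ • (M.adjugate.mulVec b) := by
  rw [← h, Matrix.mulVec_mulVec, Matrix.adjugate_mul, Matrix.smul_mulVec,
    Matrix.one_mulVec, smul_smul, inv_mul_cancel₀ hdet, one_smul]

lemma tendsto_solver {r : ℕ} {M : ℕ → Matrix (Fin r) (Fin r) ℂ} {Mlim : Matrix (Fin r) (Fin r) ℂ}
    {b : ℕ → Fin r → ℂ} (hM : Tendsto M atTop (𝓝 Mlim)) (hdet : Mlim.det ≠ 0)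
    (hb : Tendsto b atTop (𝓝 0)) :
    Tendsto (fun n => ((M n).det)⁻¹ • ((M n).adjugate.mulVec (b n))) atTop (𝓝 0) := by
  have hdet' : Tendsto (fun n => ((M n).det)⁻¹) atTop (𝓝 ((Mlim.det)⁻¹)) :=
    (((continuous_id.matrix_det).tendsto Mlim).comp hM).inv₀ hdet
  have hadj : Tendsto (fun n => (M n).adjugate) atTop (𝓝 Mlim.adjugate) :=
    ((continuous_id.matrix_adjugate).tendsto Mlim).comp hM
  rw [tendsto_pi_nhds]
  intro i
  have hmv : Tendsto (fun n => ((M n).adjugate.mulVec (b n)) i) atTop (𝓝 0) := by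
    have h : Tendsto (fun n => ∑ j : Fin r, (M n).adjugate i j * b n j) atTop
        (𝓝 (∑ j : Fin r, Mlim.adjugate i j * 0)) := by
      apply tendsto_finset_sum
      intro j _
      exact (tendsto_pi_nhds.mp ((tendsto_pi_nhds.mp hadj) i) j).mul ((tendsto_pi_nhds.mp hb) j)
    simpa [Matrix.mulVec, dotProduct] using h
  have h2 := hdet'.mul hmv
  simpa using h2

lemma sum_range_eq_middle (l a b : ℕ) (f : ℕ → ℂ) (h1 : a ≤ b) (h2 : b ≤ l)
    (hz1 : ∀ j, j < a → f j = 0) (hz2 : ∀ j, b ≤ j → j < l → f j = 0) :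
    ∑ j ∈ Finset.range l, f j = ∑ m ∈ Finset.range (b - a), f (a + m) := by
  rw [Finset.range_eq_Ico, ← Finset.sum_Ico_consecutive f (Nat.zero_le a) (le_trans h1 h2),
    ← Finset.sum_Ico_consecutive f h1 h2]
  rw [Finset.sum_eq_zero (fun j hj => hz1 j (Finset.mem_Ico.mp hj).2), zero_add]
  rw [Finset.sum_eq_zero (fun j hj => hz2 j (Finset.mem_Ico.mp hj).1 (Finset.mem_Ico.mp hj).2), add_zero]
  rw [Finset.sum_Ico_eq_sum_range, Finset.range_eq_Ico]

lemma helper_bound (t : ℝ) (ht : 1 ≤ t) (a : ℕ) (c1 c2 : ℝ) (hc1 : 0 ≤ c1) (hc2 : 0 ≤ c2) :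
    (t⁻¹)^(a+1) * (c1 + c2 * t^a) ≤ t⁻¹ * (c1 + c2) := by
  have ht0 : (0:ℝ) < t := lt_of_lt_of_le one_pos ht
  have h3 : (t⁻¹)^a * t^a = 1 := by
    rw [inv_pow]
    exact inv_mul_cancel₀ (pow_ne_zero _ (ne_of_gt ht0))
  have h1 : (t⁻¹)^(a+1) * c1 ≤ t⁻¹ * c1 := by
    apply mul_le_mul_of_nonneg_right _ hc1
    calc (t⁻¹)^(a+1) ≤ (t⁻¹)^1 :=
          pow_le_pow_of_le_one (by positivity) (inv_le_one_of_one_le₀ ht) (by omega)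
    _ = t⁻¹ := pow_one _
  calc (t⁻¹)^(a+1) * (c1 + c2 * t^a)
      = (t⁻¹)^(a+1) * c1 + t⁻¹ * c2 * ((t⁻¹)^a * t^a) := by rw [pow_succ]; ring
  _ = (t⁻¹)^(a+1) * c1 + t⁻¹ * c2 := by rw [h3, mul_one]
  _ ≤ t⁻¹ * c1 + t⁻¹ * c2 := by
      apply add_le_add h1 (le_refl _)
  _ = t⁻¹ * (c1 + c2) := by ring

lemma norm_lam_pow (lam : ℂ) (habs : ‖lam‖ = 1) (k : ℕ) : ‖lam ^ k‖ = 1 := by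
  rw [norm_pow, habs, one_pow]

lemma norm_lam_inv_pow (lam : ℂ) (habs : ‖lam‖ = 1) (k : ℕ) : ‖(lam⁻¹) ^ k‖ = 1 := by
  rw [norm_pow, norm_inv, habs, inv_one, one_pow]

lemma norm_nat_inv_pow (k p : ℕ) : ‖((k:ℂ)⁻¹) ^ p‖ = ((k:ℝ)⁻¹) ^ p := by
  rw [norm_pow, norm_inv, Complex.norm_natCast]

lemma norm_nat_inv_pow_le_one (k p : ℕ) : ‖((k:ℂ)⁻¹) ^ p‖ ≤ 1 := by
  rw [norm_nat_inv_pow]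
  apply pow_le_one₀ (by positivity)
  rcases Nat.eq_zero_or_pos k with h | h
  · subst h; simp
  · rw [inv_le_one_iff₀]
    right
    exact_mod_cast h

lemma abs_one_ne_zero {lam : ℂ} (habs : ‖lam‖ = 1) : lam ≠ 0 := by
  intro h; rw [h] at habs; simp at habs

set_option maxHeartbeats 1000000 in
lemma mem_matJ_of (r : ℕ) (lam : ℂ) (habs : ‖lam‖ = 1)
    (x y : Fin (2*r) → ℂ) (hx : ∀ i : Fin (2*r), r ≤ (i:ℕ) → x i = 0)
    (hy : ∀ i : Fin (2*r), r ≤ (i:ℕ) → y i = 0) :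
    y ∈ matJ (jordanBlock (2*r) lam) x := by
  have hlam : lam ≠ 0 := abs_one_ne_zero habs
  set A := jordanBlock (2*r) lam with hA
  set X : ℝ := ∑ j : Fin (2*r), ‖x j‖ with hX
  have hXnonneg : 0 ≤ X := Finset.sum_nonneg (fun j _ => norm_nonneg _)
  have hpadx : ∀ n, ‖padVec x n‖ ≤ X := by
    intro n
    by_cases h : n < 2*r
    · rw [padVec, dif_pos h]
      exact Finset.single_le_sum (f := fun j => ‖x j‖) (fun j _ => norm_nonneg _)
        (Finset.mem_univ (⟨n, h⟩ : Fin (2*r)))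
    · rw [padVec, dif_neg h, norm_zero]; exact hXnonneg
  have hti : ∀ i : Fin r, (i:ℕ) < 2*r := fun i => by omega
  obtain ⟨S, hS⟩ : ∃ S : ℕ → Fin r → ℂ, S = fun (k : ℕ) (i : Fin r) => ((A ^ k).mulVec x) ⟨(i:ℕ), hti i⟩ := ⟨_, rfl⟩
  obtain ⟨b, hb⟩ : ∃ b : ℕ → Fin r → ℂ, b = fun (k : ℕ) (i : Fin r) =>
    (lam⁻¹)^k * ((k:ℂ)⁻¹)^(r - (i:ℕ)) * (y ⟨(i:ℕ), hti i⟩ - S k i) := ⟨_, rfl⟩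
  -- bound on S
  have hSbound : ∀ k : ℕ, 1 ≤ k → ∀ i : Fin r,
      ‖S k i‖ ≤ (2*r) * (X * (k:ℝ)^(r - 1 - (i:ℕ))) := by
    intro k hk i
    simp only [hS]
    rw [hA, mulVec_jordan_pow _ _ hlam]
    refine le_trans (norm_sum_le _ _) ?_
    have hterm : ∀ j ∈ Finset.range (2*r),
        ‖(Nat.choose k j : ℂ) * lam^k * (lam⁻¹)^j * padVec x ((i:ℕ)+j)‖
          ≤ X * (k:ℝ)^(r - 1 - (i:ℕ)) := by
      intro j _
      by_cases hjr : (i:ℕ) + j < r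
      · rw [norm_mul, norm_mul, norm_mul, norm_lam_pow lam habs, norm_lam_inv_pow lam habs,
          mul_one, mul_one, Complex.norm_natCast]
        have h2 : (Nat.choose k j : ℝ) ≤ (k:ℝ)^(r - 1 - (i:ℕ)) := by
          calc (Nat.choose k j:ℝ) ≤ ((k^j : ℕ):ℝ) := by exact_mod_cast Nat.choose_le_pow k j
          _ = (k:ℝ)^j := by push_cast; rfl
          _ ≤ (k:ℝ)^(r - 1 - (i:ℕ)) := pow_le_pow_right₀ (by exact_mod_cast hk) (by omega)
        calc (Nat.choose k j:ℝ) * ‖padVec x ((i:ℕ)+j)‖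
            ≤ (k:ℝ)^(r - 1 - (i:ℕ)) * X :=
              mul_le_mul h2 (hpadx _) (norm_nonneg _) (by positivity)
        _ = X * (k:ℝ)^(r - 1 - (i:ℕ)) := mul_comm _ _
      · have hzero : padVec x ((i:ℕ)+j) = 0 := by
          by_cases h2 : (i:ℕ)+j < 2*r
          · rw [padVec, dif_pos h2]; exact hx ⟨(i:ℕ)+j, h2⟩ (show r ≤ (i:ℕ)+j by omega)
          · exact padVec_eq_zero _ _ (by omega)
        rw [hzero, mul_zero, norm_zero]; positivity
    calc ∑ j ∈ Finset.range (2*r), ‖(Nat.choose k j : ℂ) * lam^k * (lam⁻¹)^j * padVec x ((i:ℕ)+j)‖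
        ≤ ∑ _j ∈ Finset.range (2*r), X * (k:ℝ)^(r - 1 - (i:ℕ)) := Finset.sum_le_sum hterm
    _ = (2*r) * (X * (k:ℝ)^(r - 1 - (i:ℕ))) := by
        rw [Finset.sum_const, Finset.card_range, nsmul_eq_mul]; push_cast; ring
  -- b tends to 0
  have hb0 : Tendsto b atTop (𝓝 0) := by
    rw [tendsto_pi_nhds]
    intro i
    show Tendsto (fun k => b k i) atTop (𝓝 (0:ℂ))
    refine squeeze_zero_norm' (a := fun k : ℕ => (‖y ⟨(i:ℕ), hti i⟩‖ + 2*r*X) * (k:ℝ)⁻¹) ?_ ?_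
    · filter_upwards [eventually_ge_atTop 1] with k hk
      have hki : 1 ≤ (k:ℝ) := by exact_mod_cast hk
      simp only [hb]
      rw [norm_mul, norm_mul, norm_lam_inv_pow lam habs, one_mul, norm_nat_inv_pow]
      have h1 : ‖y ⟨(i:ℕ), hti i⟩ - S k i‖ ≤ ‖y ⟨(i:ℕ), hti i⟩‖ + 2*r*X * (k:ℝ)^(r - 1 - (i:ℕ)) := by
        refine le_trans (norm_sub_le _ _) ?_
        have := hSbound k hk i
        have h2 : (2*r : ℝ) * (X * (k:ℝ)^(r - 1 - (i:ℕ))) = 2*r*X * (k:ℝ)^(r - 1 - (i:ℕ)) := by ring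
        rw [h2] at this
        exact add_le_add le_rfl this
      have hs : r - (i:ℕ) = (r - 1 - (i:ℕ)) + 1 := by omega
      calc ((k:ℝ)⁻¹)^(r - (i:ℕ)) * ‖y ⟨(i:ℕ), hti i⟩ - S k i‖
          ≤ ((k:ℝ)⁻¹)^(r - (i:ℕ)) * (‖y ⟨(i:ℕ), hti i⟩‖ + 2*r*X * (k:ℝ)^(r - 1 - (i:ℕ))) := by
            exact mul_le_mul_of_nonneg_left h1 (by positivity)
      _ = ((k:ℝ)⁻¹)^((r - 1 - (i:ℕ)) + 1) * (‖y ⟨(i:ℕ), hti i⟩‖ + (2*r*X) * (k:ℝ)^(r - 1 - (i:ℕ))) := by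
            rw [← hs]
      _ ≤ (k:ℝ)⁻¹ * (‖y ⟨(i:ℕ), hti i⟩‖ + 2*r*X) := by
            exact helper_bound (k:ℝ) hki _ _ _ (norm_nonneg _) (by positivity)
      _ = (‖y ⟨(i:ℕ), hti i⟩‖ + 2*r*X) * (k:ℝ)⁻¹ := mul_comm _ _
    · have h := (Tendsto.inv_tendsto_atTop
        (tendsto_natCast_atTop_atTop (R := ℝ))).const_mul (‖y ⟨(i:ℕ), hti i⟩‖ + 2*r*X)
      simpa using h
  -- the correction vector
  obtain ⟨v, hv⟩ : ∃ v : ℕ → Fin r → ℂ,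
      v = fun (k : ℕ) => ((Hmat r lam k).det)⁻¹ • ((Hmat r lam k).adjugate.mulVec (b k)) := ⟨_, rfl⟩
  have hv0 : Tendsto v atTop (𝓝 0) := by
    rw [hv]
    exact tendsto_solver (tendsto_Hmat r lam) (Hlim_det_ne_zero r lam hlam) hb0
  obtain ⟨V, hV⟩ : ∃ V : ℕ → ℝ, V = fun (k : ℕ) => ∑ m : Fin r, ‖v k m‖ := ⟨_, rfl⟩
  have hV0 : Tendsto V atTop (𝓝 0) := by
    rw [hV]
    have h : Tendsto (fun k => ∑ m : Fin r, ‖v k m‖) atTop (𝓝 (∑ _m : Fin r, (0:ℝ))) := by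
      apply tendsto_finset_sum
      intro m _
      simpa using ((tendsto_pi_nhds.mp hv0) m).norm
    simpa using h
  have hVnn : ∀ k (m : Fin r), ‖v k m‖ ≤ V k := fun k m => by
    rw [hV]
    exact Finset.single_le_sum (f := fun m => ‖v k m‖) (fun j _ => norm_nonneg _) (Finset.mem_univ m)
  have hVpos : ∀ k, 0 ≤ V k := fun k => by
    rw [hV]; exact Finset.sum_nonneg (fun j _ => norm_nonneg _)
  obtain ⟨w, hw⟩ : ∃ w : ℕ → Fin (2*r) → ℂ, w = fun (k : ℕ) (j : Fin (2*r)) =>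
    if h : r ≤ (j:ℕ) then ((k:ℂ)⁻¹)^((j:ℕ) - r) * v k ⟨(j:ℕ) - r, by omega⟩ else 0 := ⟨_, rfl⟩
  obtain ⟨z, hz⟩ : ∃ z : ℕ → Fin (2*r) → ℂ, z = fun (k : ℕ) => x + w k := ⟨_, rfl⟩
  have hwbound : ∀ k (j : Fin (2*r)), ‖w k j‖ ≤ V k := by
    intro k j
    simp only [hw]
    by_cases h : r ≤ (j:ℕ)
    · rw [dif_pos h, norm_mul]
      calc ‖((k:ℂ)⁻¹)^((j:ℕ) - r)‖ * ‖v k ⟨(j:ℕ) - r, by omega⟩‖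
          ≤ 1 * ‖v k ⟨(j:ℕ) - r, by omega⟩‖ :=
            mul_le_mul_of_nonneg_right (norm_nat_inv_pow_le_one _ _) (norm_nonneg _)
      _ = ‖v k ⟨(j:ℕ) - r, by omega⟩‖ := one_mul _
      _ ≤ V k := hVnn _ _
    · rw [dif_neg h, norm_zero]; exact hVpos k
  have hztend : Tendsto z atTop (𝓝 x) := by
    rw [tendsto_pi_nhds]
    intro j
    have hwj : Tendsto (fun k => w k j) atTop (𝓝 0) :=
      squeeze_zero_norm (fun k => hwbound k j) hV0
    have hconst : Tendsto (fun _ : ℕ => x j) atTop (𝓝 (x j)) := tendsto_const_nhds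
    have hsum := hconst.add hwj
    rw [add_zero] at hsum
    simp only [hz, Pi.add_apply]
    exact hsum
  -- pad of w
  have hpadw : ∀ k n (hnr : n - r < r), r ≤ n → n < 2*r →
      padVec (w k) n = ((k:ℂ)⁻¹)^(n - r) * v k ⟨n - r, hnr⟩ := by
    intro k n hnr h1 h2
    rw [padVec, dif_pos h2]
    simp only [hw]
    rw [dif_pos (show r ≤ n from h1)]
  have hpadw0 : ∀ k n, n < r → padVec (w k) n = 0 := by
    intro k n h1
    rw [padVec, dif_pos (show n < 2*r by omega)]
    simp only [hw]
    rw [dif_neg (show ¬ r ≤ n by omega)]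
  -- A^k x vanishes on bottom coordinates
  have hAxbot : ∀ k (i : Fin (2*r)), r ≤ (i:ℕ) → ((A ^ k).mulVec x) i = 0 := by
    intro k i hi
    rw [hA, mulVec_jordan_pow _ _ hlam]
    apply Finset.sum_eq_zero
    intro j _
    have hzero : padVec x ((i:ℕ)+j) = 0 := by
      by_cases h2 : (i:ℕ)+j < 2*r
      · rw [padVec, dif_pos h2]; exact hx ⟨(i:ℕ)+j, h2⟩ (show r ≤ (i:ℕ)+j by omega)
      · exact padVec_eq_zero _ _ (by omega)
    rw [hzero, mul_zero]
  -- bottom coordinates of A^k (z k) are small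
  have hbot : ∀ k, 1 ≤ k → ∀ i : Fin (2*r), r ≤ (i:ℕ) →
      ‖((A ^ k).mulVec (z k)) i‖ ≤ (2*r) * V k := by
    intro k hk i hi
    simp only [hz]
    rw [Matrix.mulVec_add, Pi.add_apply, hAxbot k i hi, zero_add]
    rw [hA, mulVec_jordan_pow _ _ hlam]
    refine le_trans (norm_sum_le _ _) ?_
    have hterm : ∀ j ∈ Finset.range (2*r),
        ‖(Nat.choose k j : ℂ) * lam^k * (lam⁻¹)^j * padVec (w k) ((i:ℕ)+j)‖ ≤ V k := by
      intro j _
      by_cases h2 : (i:ℕ)+j < 2*r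
      · rw [hpadw k _ (by omega) (by omega) h2]
        rw [norm_mul, norm_mul, norm_mul, norm_lam_pow lam habs, norm_lam_inv_pow lam habs,
          mul_one, mul_one, Complex.norm_natCast, norm_mul, norm_nat_inv_pow]
        have hchoose : (Nat.choose k j : ℝ) ≤ (k:ℝ)^j := by
          calc (Nat.choose k j:ℝ) ≤ ((k^j : ℕ):ℝ) := by exact_mod_cast Nat.choose_le_pow k j
          _ = (k:ℝ)^j := by push_cast; rfl
        have hkR : (1:ℝ) ≤ (k:ℝ) := by exact_mod_cast hk
        have hkR0 : (0:ℝ) < (k:ℝ) := by linarith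
        have hcc : (Nat.choose k j : ℝ) * ((k:ℝ)⁻¹)^((i:ℕ)+j - r) ≤ 1 := by
          have hje : j ≤ (i:ℕ)+j - r := by omega
          calc (Nat.choose k j : ℝ) * ((k:ℝ)⁻¹)^((i:ℕ)+j - r)
              ≤ (k:ℝ)^j * ((k:ℝ)⁻¹)^((i:ℕ)+j - r) :=
                mul_le_mul_of_nonneg_right hchoose (by positivity)
          _ ≤ (k:ℝ)^((i:ℕ)+j-r) * ((k:ℝ)⁻¹)^((i:ℕ)+j - r) := by
                exact mul_le_mul_of_nonneg_right (pow_le_pow_right₀ hkR hje) (by positivity)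
          _ = 1 := by
                rw [inv_pow]
                exact mul_inv_cancel₀ (pow_ne_zero _ (ne_of_gt hkR0))
        calc (Nat.choose k j : ℝ) * (((k:ℝ)⁻¹)^((i:ℕ)+j - r) * ‖v k ⟨(i:ℕ)+j - r, by omega⟩‖)
            = ((Nat.choose k j : ℝ) * ((k:ℝ)⁻¹)^((i:ℕ)+j - r)) * ‖v k ⟨(i:ℕ)+j - r, by omega⟩‖ := by ring
        _ ≤ 1 * ‖v k ⟨(i:ℕ)+j - r, by omega⟩‖ :=
              mul_le_mul_of_nonneg_right hcc (norm_nonneg _)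
        _ = ‖v k ⟨(i:ℕ)+j - r, by omega⟩‖ := one_mul _
        _ ≤ V k := hVnn _ _
      · rw [padVec_eq_zero _ _ (by omega), mul_zero, norm_zero]
        exact hVpos k
    calc ∑ j ∈ Finset.range (2*r), ‖(Nat.choose k j : ℂ) * lam^k * (lam⁻¹)^j * padVec (w k) ((i:ℕ)+j)‖
        ≤ ∑ _j ∈ Finset.range (2*r), V k := Finset.sum_le_sum hterm
    _ = (2*r) * V k := by
        rw [Finset.sum_const, Finset.card_range, nsmul_eq_mul]; push_cast; ring
  -- top coordinates of A^k (z k) are exactly y, when solvable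
  have htop : ∀ k, 1 ≤ k → (Hmat r lam k).det ≠ 0 → ∀ i : Fin r,
      ((A ^ k).mulVec (z k)) ⟨(i:ℕ), hti i⟩ = y ⟨(i:ℕ), hti i⟩ := by
    intro k hk1 hdet i
    have hkC : (k:ℂ) ≠ 0 := by
      simp only [ne_eq, Nat.cast_eq_zero]; omega
    have hsol : (Hmat r lam k).mulVec (v k) = b k := by
      have hvk : v k = ((Hmat r lam k).det)⁻¹ • ((Hmat r lam k).adjugate.mulVec (b k)) := by rw [hv]
      rw [hvk]
      exact mulVec_solution _ hdet _
    have hsoli := congrFun hsol i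
    rw [Matrix.mulVec, dotProduct] at hsoli
    have hconv : ∑ m : Fin r, Hmat r lam k i m * v k m
        = ∑ m ∈ Finset.range r, ((Nat.choose k (r - (i:ℕ) + m) : ℂ)
            * ((k:ℂ)⁻¹)^(r - (i:ℕ) + m) * (lam⁻¹)^(r - (i:ℕ) + m) * padVec (v k) m) := by
      rw [← Fin.sum_univ_eq_sum_range (fun m => ((Nat.choose k (r - (i:ℕ) + m) : ℂ)
            * ((k:ℂ)⁻¹)^(r - (i:ℕ) + m) * (lam⁻¹)^(r - (i:ℕ) + m) * padVec (v k) m)) r]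
      apply Finset.sum_congr rfl
      intro m _
      have hpv : padVec (v k) ((m:ℕ)) = v k m := by rw [padVec, dif_pos m.isLt, Fin.eta]
      rw [hpv, Hmat]
      rfl
    rw [hconv] at hsoli
    -- multiply both sides by lam^k * k^(r-i)
    have key : ∑ m ∈ Finset.range r, ((Nat.choose k (r - (i:ℕ) + m) : ℂ)
        * lam^k * (lam⁻¹)^(r - (i:ℕ) + m) * (((k:ℂ)⁻¹)^m * padVec (v k) m))
        = y ⟨(i:ℕ), hti i⟩ - S k i := by
      have hmul := congrArg (fun c => lam^k * (k:ℂ)^(r - (i:ℕ)) * c) hsoli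
      rw [Finset.mul_sum] at hmul
      have hlhs : ∀ m ∈ Finset.range r,
          lam^k * (k:ℂ)^(r - (i:ℕ)) * ((Nat.choose k (r - (i:ℕ) + m) : ℂ)
            * ((k:ℂ)⁻¹)^(r - (i:ℕ) + m) * (lam⁻¹)^(r - (i:ℕ) + m) * padVec (v k) m)
          = (Nat.choose k (r - (i:ℕ) + m) : ℂ) * lam^k * (lam⁻¹)^(r - (i:ℕ) + m)
            * (((k:ℂ)⁻¹)^m * padVec (v k) m) := by
        intro m _
        have h1 : (k:ℂ)^(r - (i:ℕ)) * ((k:ℂ)⁻¹)^(r - (i:ℕ) + m) = ((k:ℂ)⁻¹)^m := by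
          rw [pow_add, ← mul_assoc, inv_pow, mul_inv_cancel₀ (pow_ne_zero _ hkC), one_mul]
        calc lam^k * (k:ℂ)^(r - (i:ℕ)) * ((Nat.choose k (r - (i:ℕ) + m) : ℂ)
            * ((k:ℂ)⁻¹)^(r - (i:ℕ) + m) * (lam⁻¹)^(r - (i:ℕ) + m) * padVec (v k) m)
            = (Nat.choose k (r - (i:ℕ) + m) : ℂ) * lam^k * (lam⁻¹)^(r - (i:ℕ) + m)
              * (((k:ℂ)^(r - (i:ℕ)) * ((k:ℂ)⁻¹)^(r - (i:ℕ) + m)) * padVec (v k) m) := by ring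
        _ = _ := by rw [h1]
      rw [Finset.sum_congr rfl hlhs] at hmul
      rw [hmul]
      simp only [hb]
      have h2 : lam^k * (lam⁻¹)^k = 1 := by
        rw [← mul_pow, mul_inv_cancel₀ hlam, one_pow]
      have h3 : (k:ℂ)^(r - (i:ℕ)) * ((k:ℂ)⁻¹)^(r - (i:ℕ)) = 1 := by
        rw [← mul_pow, mul_inv_cancel₀ hkC, one_pow]
      calc lam^k * (k:ℂ)^(r - (i:ℕ)) * ((lam⁻¹)^k * ((k:ℂ)⁻¹)^(r - (i:ℕ)) * (y ⟨(i:ℕ), hti i⟩ - S k i))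
          = (lam^k * (lam⁻¹)^k) * ((k:ℂ)^(r - (i:ℕ)) * ((k:ℂ)⁻¹)^(r - (i:ℕ))) * (y ⟨(i:ℕ), hti i⟩ - S k i) := by ring
      _ = y ⟨(i:ℕ), hti i⟩ - S k i := by rw [h2, h3, mul_one, one_mul]
    -- compute A^k w at top coordinate
    have hwpart : ((A ^ k).mulVec (w k)) ⟨(i:ℕ), hti i⟩
        = ∑ m ∈ Finset.range r, ((Nat.choose k (r - (i:ℕ) + m) : ℂ)
            * lam^k * (lam⁻¹)^(r - (i:ℕ) + m) * (((k:ℂ)⁻¹)^m * padVec (v k) m)) := by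
      rw [hA, mulVec_jordan_pow _ _ hlam]
      have hmid := sum_range_eq_middle (2*r) (r - (i:ℕ)) (2*r - (i:ℕ))
        (fun j => (Nat.choose k j : ℂ) * lam^k * (lam⁻¹)^j * padVec (w k) ((i:ℕ)+j))
        (by omega) (by omega)
        (fun j hj => by
          show (Nat.choose k j : ℂ) * lam^k * (lam⁻¹)^j * padVec (w k) ((i:ℕ)+j) = 0
          rw [hpadw0 k _ (by omega), mul_zero])
        (fun j hj1 hj2 => by
          show (Nat.choose k j : ℂ) * lam^k * (lam⁻¹)^j * padVec (w k) ((i:ℕ)+j) = 0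
          rw [padVec_eq_zero _ _ (by omega), mul_zero])
      rw [hmid]
      have hrr : (2*r - (i:ℕ)) - (r - (i:ℕ)) = r := by omega
      rw [hrr]
      apply Finset.sum_congr rfl
      intro m hm
      have hmr : m < r := Finset.mem_range.mp hm
      have he1 : (i:ℕ) + (r - (i:ℕ) + m) = r + m := by omega
      rw [he1, hpadw k (r+m) (by omega) (by omega) (by omega)]
      have he2 : r + m - r = m := by omega
      have he3 : padVec (v k) m = v k ⟨m, hmr⟩ := by rw [padVec, dif_pos hmr]
      simp only [he2, he3]
    simp only [hz]
    rw [Matrix.mulVec_add, Pi.add_apply, hwpart, key]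
    simp only [hS]
    ring
  -- eventual invertibility
  have hdetev : ∀ᶠ k in atTop, (Hmat r lam k).det ≠ 0 := by
    have h : Tendsto (fun k => (Hmat r lam k).det) atTop (𝓝 ((Hlim r lam).det)) :=
      ((continuous_id.matrix_det).tendsto _).comp (tendsto_Hmat r lam)
    exact h.eventually_ne (Hlim_det_ne_zero r lam hlam)
  obtain ⟨N, hN⟩ := Filter.eventually_atTop.mp (hdetev.and (eventually_ge_atTop 1))
  set N' := max N 1 with hN'
  have hNle : N ≤ N' := le_max_left _ _
  have hN'1 : 1 ≤ N' := le_max_right _ _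
  refine ⟨fun n => n + N', fun n => z (n + N'),
    fun a b hab => by show a + N' < b + N'; omega,
    by show 0 < 0 + N'; omega, ?_, ?_⟩
  · exact hztend.comp (tendsto_add_atTop_nat N')
  · rw [tendsto_pi_nhds]
    intro i
    by_cases hi : (i:ℕ) < r
    · have hcoord : ∀ n : ℕ, ((A ^ (n + N')).mulVec (z (n + N'))) i = y i := by
        intro n
        have hQ := hN (n + N') (by omega)
        have : i = (⟨((⟨(i:ℕ), hi⟩ : Fin r) : ℕ), hti ⟨(i:ℕ), hi⟩⟩ : Fin (2*r)) := by
          apply Fin.ext; rfl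
        rw [this]
        exact htop (n + N') (by omega) hQ.1 ⟨(i:ℕ), hi⟩
      rw [show (fun n => ((A ^ (n + N')).mulVec (z (n + N'))) i) = fun _ => y i from funext hcoord]
      exact tendsto_const_nhds
    · have hyi : y i = 0 := hy i (by omega)
      rw [hyi]
      apply squeeze_zero_norm' (a := fun n => (2*r) * V (n + N'))
      · filter_upwards [] with n
        exact hbot (n + N') (by omega) i (by omega)
      · have h := (hV0.comp (tendsto_add_atTop_nat N')).const_mul ((2*r : ℝ))
        simpa using h

lemma sum_range_split (l a b : ℕ) (f : ℕ → ℂ) (h1 : a ≤ b) (h2 : b ≤ l)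
    (hz2 : ∀ j, b ≤ j → j < l → f j = 0) :
    ∑ j ∈ Finset.range l, f j
      = (∑ j ∈ Finset.range a, f j) + ∑ m ∈ Finset.range (b - a), f (a + m) := by
  rw [Finset.range_eq_Ico, ← Finset.sum_Ico_consecutive f (Nat.zero_le a) (le_trans h1 h2),
    ← Finset.sum_Ico_consecutive f h1 h2]
  rw [Finset.sum_eq_zero (fun j hj => hz2 j (Finset.mem_Ico.mp hj).1 (Finset.mem_Ico.mp hj).2),
    add_zero]
  congr 1
  · rw [Finset.range_eq_Ico]
  rw [Finset.sum_Ico_eq_sum_range, Finset.range_eq_Ico]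

set_option maxHeartbeats 1000000 in
lemma matJ_necessary (r : ℕ) (lam : ℂ) (habs : ‖lam‖ = 1)
    (x y : Fin (2*r) → ℂ) (hy : y ∈ matJ (jordanBlock (2*r) lam) x) :
    (∀ i : Fin (2*r), r ≤ (i:ℕ) → x i = 0) ∧ (∀ i : Fin (2*r), r ≤ (i:ℕ) → y i = 0) := by
  have hlam : lam ≠ 0 := abs_one_ne_zero habs
  obtain ⟨κ, zz, hmono, hκ0, hzten, hAz⟩ := hy
  set A := jordanBlock (2*r) lam with hA
  have hκpos : ∀ n, 1 ≤ κ n := by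
    intro n
    have h := hmono.monotone (Nat.zero_le n)
    omega
  have hκtend : Tendsto κ atTop atTop := hmono.tendsto_atTop
  have hκR : Tendsto (fun n => (κ n : ℝ)) atTop atTop :=
    tendsto_natCast_atTop_atTop.comp hκtend
  have hti : ∀ i : Fin r, (i:ℕ) < 2*r := fun i => by omega
  -- eventual bounds on coordinates of z and of A^κ z
  have hzbd : ∀ᶠ n in atTop, ∀ j : Fin (2*r), ‖zz n j‖ ≤ ‖x j‖ + 1 := by
    apply Filter.eventually_all.mpr
    intro j
    have h := ((tendsto_pi_nhds.mp hzten) j).norm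
    exact (h.eventually_lt_const (by linarith [norm_nonneg (x j)])).mono (fun n hn => le_of_lt hn)
  have hAzbd : ∀ᶠ n in atTop, ∀ i : Fin (2*r), ‖((A ^ κ n).mulVec (zz n)) i‖ ≤ ‖y i‖ + 1 := by
    apply Filter.eventually_all.mpr
    intro i
    have h := ((tendsto_pi_nhds.mp hAz) i).norm
    exact (h.eventually_lt_const (by linarith [norm_nonneg (y i)])).mono (fun n hn => le_of_lt hn)
  set B : ℝ := ∑ j : Fin (2*r), (‖x j‖ + 1) with hB
  have hBnn : 0 ≤ B := Finset.sum_nonneg (fun j _ => by positivity)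
  have hpadbd : ∀ᶠ n in atTop, ∀ m : ℕ, ‖padVec (zz n) m‖ ≤ B := by
    filter_upwards [hzbd] with n hn m
    by_cases h : m < 2*r
    · rw [padVec, dif_pos h]
      calc ‖zz n ⟨m, h⟩‖ ≤ ‖x ⟨m, h⟩‖ + 1 := hn _
      _ ≤ B := Finset.single_le_sum (f := fun j => ‖x j‖ + 1) (fun j _ => by positivity)
          (Finset.mem_univ (⟨m, h⟩ : Fin (2*r)))
    · rw [padVec, dif_neg h, norm_zero]; exact hBnn
  -- scaled bottom vector and target
  obtain ⟨D, hD⟩ : ∃ D : ℕ → Fin r → ℂ,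
      D = fun (n : ℕ) (m : Fin r) => ((κ n : ℂ))^(m:ℕ) * padVec (zz n) (r + m) := ⟨_, rfl⟩
  obtain ⟨T, hT⟩ : ∃ T : ℕ → Fin r → ℂ,
      T = fun (n : ℕ) (i : Fin r) => ∑ j ∈ Finset.range (r - (i:ℕ)),
        (Nat.choose (κ n) j : ℂ) * lam^(κ n) * (lam⁻¹)^j * padVec (zz n) ((i:ℕ)+j) := ⟨_, rfl⟩
  obtain ⟨bb, hbb⟩ : ∃ bb : ℕ → Fin r → ℂ,
      bb = fun (n : ℕ) (i : Fin r) => (lam⁻¹)^(κ n) * ((κ n : ℂ)⁻¹)^(r - (i:ℕ))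
        * (((A ^ κ n).mulVec (zz n)) ⟨(i:ℕ), hti i⟩ - T n i) := ⟨_, rfl⟩
  -- decomposition of the top coordinates
  have hdecomp : ∀ n (i : Fin r),
      ((A ^ κ n).mulVec (zz n)) ⟨(i:ℕ), hti i⟩ - T n i
        = ∑ m ∈ Finset.range r, (Nat.choose (κ n) (r - (i:ℕ) + m) : ℂ) * lam^(κ n)
            * (lam⁻¹)^(r - (i:ℕ) + m) * padVec (zz n) (r + m) := by
    intro n i
    rw [hA, mulVec_jordan_pow _ _ hlam]
    have hsplit := sum_range_split (2*r) (r - (i:ℕ)) (2*r - (i:ℕ))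
      (fun j => (Nat.choose (κ n) j : ℂ) * lam^(κ n) * (lam⁻¹)^j * padVec (zz n) ((i:ℕ)+j))
      (by omega) (by omega)
      (fun j hj1 hj2 => by
        show (Nat.choose (κ n) j : ℂ) * lam^(κ n) * (lam⁻¹)^j * padVec (zz n) ((i:ℕ)+j) = 0
        rw [padVec_eq_zero _ _ (by omega), mul_zero])
    rw [hsplit, hT]
    simp only
    rw [add_comm, add_sub_assoc, sub_self, add_zero]
    have hrr : (2*r - (i:ℕ)) - (r - (i:ℕ)) = r := by omega
    rw [hrr]
    apply Finset.sum_congr rfl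
    intro m hm
    have he1 : (i:ℕ) + (r - (i:ℕ) + m) = r + m := by omega
    rw [he1]
  -- the linear system
  have hkey : ∀ n, (Hmat r lam (κ n)).mulVec (D n) = bb n := by
    intro n
    funext i
    have hkC : ((κ n : ℂ)) ≠ 0 := by
      simp only [ne_eq, Nat.cast_eq_zero]
      have := hκpos n; omega
    rw [Matrix.mulVec, dotProduct]
    have hconv : ∑ m : Fin r, Hmat r lam (κ n) i m * D n m
        = ∑ m ∈ Finset.range r, ((Nat.choose (κ n) (r - (i:ℕ) + m) : ℂ)
            * ((κ n:ℂ)⁻¹)^(r - (i:ℕ) + m) * (lam⁻¹)^(r - (i:ℕ) + m)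
            * (((κ n : ℂ))^m * padVec (zz n) (r + m))) := by
      rw [← Fin.sum_univ_eq_sum_range (fun m => ((Nat.choose (κ n) (r - (i:ℕ) + m) : ℂ)
            * ((κ n:ℂ)⁻¹)^(r - (i:ℕ) + m) * (lam⁻¹)^(r - (i:ℕ) + m)
            * (((κ n : ℂ))^m * padVec (zz n) (r + m)))) r]
      apply Finset.sum_congr rfl
      intro m _
      rw [hD, Hmat]
      rfl
    rw [hconv, hbb]
    simp only
    rw [hdecomp n i, Finset.mul_sum]
    apply Finset.sum_congr rfl
    intro m _
    have h1 : ((κ n:ℂ)⁻¹)^(r - (i:ℕ) + m) * ((κ n:ℂ))^m = ((κ n:ℂ)⁻¹)^(r - (i:ℕ)) := by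
      have hmm : ((κ n:ℂ)⁻¹)^m * ((κ n:ℂ))^m = 1 := by
        rw [inv_pow]
        exact inv_mul_cancel₀ (pow_ne_zero _ hkC)
      rw [pow_add, mul_assoc, hmm, mul_one]
    have h2 : (lam⁻¹)^(κ n) * lam^(κ n) = 1 := by
      rw [← mul_pow, inv_mul_cancel₀ hlam, one_pow]
    calc (Nat.choose (κ n) (r - (i:ℕ) + m) : ℂ)
          * ((κ n:ℂ)⁻¹)^(r - (i:ℕ) + m) * (lam⁻¹)^(r - (i:ℕ) + m)
          * (((κ n : ℂ))^m * padVec (zz n) (r + m))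
        = (Nat.choose (κ n) (r - (i:ℕ) + m) : ℂ)
          * (((κ n:ℂ)⁻¹)^(r - (i:ℕ) + m) * ((κ n:ℂ))^m) * (lam⁻¹)^(r - (i:ℕ) + m)
          * padVec (zz n) (r + m) := by ring
    _ = (Nat.choose (κ n) (r - (i:ℕ) + m) : ℂ)
          * ((κ n:ℂ)⁻¹)^(r - (i:ℕ)) * (lam⁻¹)^(r - (i:ℕ) + m)
          * padVec (zz n) (r + m) := by rw [h1]
    _ = ((lam⁻¹)^(κ n) * lam^(κ n)) * ((Nat.choose (κ n) (r - (i:ℕ) + m) : ℂ)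
          * ((κ n:ℂ)⁻¹)^(r - (i:ℕ)) * (lam⁻¹)^(r - (i:ℕ) + m)
          * padVec (zz n) (r + m)) := by rw [h2, one_mul]
    _ = (lam⁻¹)^(κ n) * ((κ n:ℂ)⁻¹)^(r - (i:ℕ))
          * ((Nat.choose (κ n) (r - (i:ℕ) + m) : ℂ) * lam^(κ n)
            * (lam⁻¹)^(r - (i:ℕ) + m) * padVec (zz n) (r + m)) := by ring
  -- bb tends to zero
  have hbb0 : Tendsto bb atTop (𝓝 0) := by
    rw [tendsto_pi_nhds]
    intro i
    show Tendsto (fun n => bb n i) atTop (𝓝 (0:ℂ))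
    refine squeeze_zero_norm'
      (a := fun n : ℕ => ((‖y ⟨(i:ℕ), hti i⟩‖ + 1) + 2*r*B) * ((κ n : ℝ))⁻¹) ?_ ?_
    · filter_upwards [hpadbd, hAzbd] with n hpad hAzn
      have hk1 : 1 ≤ κ n := hκpos n
      have hkR : (1:ℝ) ≤ (κ n : ℝ) := by exact_mod_cast hk1
      rw [hbb]
      simp only
      rw [norm_mul, norm_mul, norm_lam_inv_pow lam habs, one_mul, norm_nat_inv_pow]
      have hTbd : ‖T n i‖ ≤ 2*r*B * ((κ n:ℝ))^(r - 1 - (i:ℕ)) := by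
        rw [hT]
        simp only
        refine le_trans (norm_sum_le _ _) ?_
        have hterm : ∀ j ∈ Finset.range (r - (i:ℕ)),
            ‖(Nat.choose (κ n) j : ℂ) * lam^(κ n) * (lam⁻¹)^j * padVec (zz n) ((i:ℕ)+j)‖
              ≤ B * ((κ n:ℝ))^(r - 1 - (i:ℕ)) := by
          intro j hj
          have hjlt : j < r - (i:ℕ) := Finset.mem_range.mp hj
          rw [norm_mul, norm_mul, norm_mul, norm_lam_pow lam habs, norm_lam_inv_pow lam habs,
            mul_one, mul_one, Complex.norm_natCast]
          have h2 : (Nat.choose (κ n) j : ℝ) ≤ ((κ n):ℝ)^(r - 1 - (i:ℕ)) := by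
            calc (Nat.choose (κ n) j:ℝ) ≤ (((κ n)^j : ℕ):ℝ) := by
                  exact_mod_cast Nat.choose_le_pow (κ n) j
            _ = ((κ n):ℝ)^j := by push_cast; rfl
            _ ≤ ((κ n):ℝ)^(r - 1 - (i:ℕ)) := pow_le_pow_right₀ hkR (by omega)
          calc (Nat.choose (κ n) j:ℝ) * ‖padVec (zz n) ((i:ℕ)+j)‖
              ≤ ((κ n):ℝ)^(r - 1 - (i:ℕ)) * B :=
                mul_le_mul h2 (hpad _) (norm_nonneg _) (by positivity)
          _ = B * ((κ n):ℝ)^(r - 1 - (i:ℕ)) := mul_comm _ _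
        calc ∑ j ∈ Finset.range (r - (i:ℕ)),
              ‖(Nat.choose (κ n) j : ℂ) * lam^(κ n) * (lam⁻¹)^j * padVec (zz n) ((i:ℕ)+j)‖
            ≤ ∑ _j ∈ Finset.range (r - (i:ℕ)), B * ((κ n:ℝ))^(r - 1 - (i:ℕ)) :=
              Finset.sum_le_sum hterm
        _ = ((r - (i:ℕ) : ℕ) : ℝ) * (B * ((κ n:ℝ))^(r - 1 - (i:ℕ))) := by
              rw [Finset.sum_const, Finset.card_range, nsmul_eq_mul]
        _ ≤ 2*r*B * ((κ n:ℝ))^(r - 1 - (i:ℕ)) := by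
              have hc : ((r - (i:ℕ) : ℕ) : ℝ) ≤ 2*r := by
                have : (r - (i:ℕ) : ℕ) ≤ 2*r := by omega
                exact_mod_cast this
              have hnn : (0:ℝ) ≤ B * ((κ n:ℝ))^(r - 1 - (i:ℕ)) := by positivity
              calc ((r - (i:ℕ) : ℕ) : ℝ) * (B * ((κ n:ℝ))^(r - 1 - (i:ℕ)))
                  ≤ 2*r * (B * ((κ n:ℝ))^(r - 1 - (i:ℕ))) := mul_le_mul_of_nonneg_right hc hnn
              _ = 2*r*B * ((κ n:ℝ))^(r - 1 - (i:ℕ)) := by ring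
      have h1 : ‖((A ^ κ n).mulVec (zz n)) ⟨(i:ℕ), hti i⟩ - T n i‖
          ≤ (‖y ⟨(i:ℕ), hti i⟩‖ + 1) + 2*r*B * ((κ n:ℝ))^(r - 1 - (i:ℕ)) :=
        le_trans (norm_sub_le _ _) (add_le_add (hAzn _) hTbd)
      have hs : r - (i:ℕ) = (r - 1 - (i:ℕ)) + 1 := by omega
      calc ((κ n:ℝ)⁻¹)^(r - (i:ℕ)) * ‖((A ^ κ n).mulVec (zz n)) ⟨(i:ℕ), hti i⟩ - T n i‖
          ≤ ((κ n:ℝ)⁻¹)^(r - (i:ℕ))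
            * ((‖y ⟨(i:ℕ), hti i⟩‖ + 1) + 2*r*B * ((κ n:ℝ))^(r - 1 - (i:ℕ))) :=
            mul_le_mul_of_nonneg_left h1 (by positivity)
      _ = ((κ n:ℝ)⁻¹)^((r - 1 - (i:ℕ)) + 1)
            * ((‖y ⟨(i:ℕ), hti i⟩‖ + 1) + (2*r*B) * ((κ n:ℝ))^(r - 1 - (i:ℕ))) := by rw [← hs]
      _ ≤ ((κ n:ℝ))⁻¹ * ((‖y ⟨(i:ℕ), hti i⟩‖ + 1) + 2*r*B) :=
            helper_bound ((κ n:ℝ)) hkR _ _ _ (by positivity) (by positivity)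
      _ = ((‖y ⟨(i:ℕ), hti i⟩‖ + 1) + 2*r*B) * ((κ n:ℝ))⁻¹ := mul_comm _ _
    · have h := (Tendsto.inv_tendsto_atTop hκR).const_mul ((‖y ⟨(i:ℕ), hti i⟩‖ + 1) + 2*r*B)
      simpa using h
  -- D tends to zero
  have hHten : Tendsto (fun n => Hmat r lam (κ n)) atTop (𝓝 (Hlim r lam)) :=
    (tendsto_Hmat r lam).comp hκtend
  have hdetev : ∀ᶠ n in atTop, (Hmat r lam (κ n)).det ≠ 0 := by
    have h : Tendsto (fun n => (Hmat r lam (κ n)).det) atTop (𝓝 ((Hlim r lam).det)) :=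
      ((continuous_id.matrix_det).tendsto _).comp hHten
    exact h.eventually_ne (Hlim_det_ne_zero r lam hlam)
  have hD0 : Tendsto D atTop (𝓝 0) := by
    have hu0 : Tendsto (fun n => ((Hmat r lam (κ n)).det)⁻¹
        • ((Hmat r lam (κ n)).adjugate.mulVec (bb n))) atTop (𝓝 0) :=
      tendsto_solver hHten (Hlim_det_ne_zero r lam hlam) hbb0
    apply Tendsto.congr' _ hu0
    filter_upwards [hdetev] with n hdet
    exact (solution_unique _ hdet (hkey n)).symm
  -- conclusion for x
  have hxbot : ∀ i : Fin (2*r), r ≤ (i:ℕ) → x i = 0 := by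
    intro i hi
    have him : (i:ℕ) - r < r := by omega
    have hzlim : Tendsto (fun n => zz n i) atTop (𝓝 (x i)) := (tendsto_pi_nhds.mp hzten) i
    have hzzero : Tendsto (fun n => zz n i) atTop (𝓝 0) := by
      apply squeeze_zero_norm' (a := fun n => ‖D n ⟨(i:ℕ) - r, him⟩‖)
      · filter_upwards [] with n
        have hk1 : 1 ≤ κ n := hκpos n
        have hkR : (1:ℝ) ≤ (κ n : ℝ) := by exact_mod_cast hk1
        rw [hD]
        simp only
        have hpv : padVec (zz n) (r + ((i:ℕ) - r)) = zz n i := by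
          have he : r + ((i:ℕ) - r) = (i:ℕ) := by omega
          rw [he, padVec, dif_pos i.isLt, Fin.eta]
        rw [hpv, norm_mul, norm_pow, Complex.norm_natCast]
        have hone : (1:ℝ) ≤ ((κ n:ℝ))^((i:ℕ) - r) := one_le_pow₀ hkR
        calc ‖zz n i‖ = 1 * ‖zz n i‖ := (one_mul _).symm
        _ ≤ ((κ n:ℝ))^((i:ℕ) - r) * ‖zz n i‖ := mul_le_mul_of_nonneg_right hone (norm_nonneg _)
      · have := ((tendsto_pi_nhds.mp hD0) ⟨(i:ℕ) - r, him⟩).norm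
        simpa using this
    exact tendsto_nhds_unique hzlim hzzero
  refine ⟨hxbot, ?_⟩
  -- conclusion for y
  intro i hi
  have hAzlim : Tendsto (fun n => ((A ^ κ n).mulVec (zz n)) i) atTop (𝓝 (y i)) :=
    (tendsto_pi_nhds.mp hAz) i
  obtain ⟨VD, hVD⟩ : ∃ VD : ℕ → ℝ, VD = fun n => ∑ m : Fin r, ‖D n m‖ := ⟨_, rfl⟩
  have hVD0 : Tendsto VD atTop (𝓝 0) := by
    rw [hVD]
    have h : Tendsto (fun n => ∑ m : Fin r, ‖D n m‖) atTop (𝓝 (∑ _m : Fin r, (0:ℝ))) := by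
      apply tendsto_finset_sum
      intro m _
      simpa using ((tendsto_pi_nhds.mp hD0) m).norm
    simpa using h
  have hAzzero : Tendsto (fun n => ((A ^ κ n).mulVec (zz n)) i) atTop (𝓝 0) := by
    apply squeeze_zero_norm' (a := fun n => (2*r) * VD n)
    · filter_upwards [] with n
      have hk1 : 1 ≤ κ n := hκpos n
      have hkR : (1:ℝ) ≤ (κ n : ℝ) := by exact_mod_cast hk1
      rw [hA, mulVec_jordan_pow _ _ hlam]
      refine le_trans (norm_sum_le _ _) ?_
      have hterm : ∀ j ∈ Finset.range (2*r),
          ‖(Nat.choose (κ n) j : ℂ) * lam^(κ n) * (lam⁻¹)^j * padVec (zz n) ((i:ℕ)+j)‖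
            ≤ VD n := by
        intro j _
        by_cases h2 : (i:ℕ)+j < 2*r
        · have hm : (i:ℕ)+j - r < r := by omega
          rw [norm_mul, norm_mul, norm_mul, norm_lam_pow lam habs, norm_lam_inv_pow lam habs,
            mul_one, mul_one, Complex.norm_natCast]
          have hDm : ‖D n ⟨(i:ℕ)+j - r, hm⟩‖
              = ((κ n:ℝ))^((i:ℕ)+j - r) * ‖padVec (zz n) ((i:ℕ)+j)‖ := by
            rw [hD]
            simp only
            have he : r + ((i:ℕ)+j - r) = (i:ℕ)+j := by omega
            rw [he, norm_mul, norm_pow, Complex.norm_natCast]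
          have hch : (Nat.choose (κ n) j : ℝ) ≤ ((κ n):ℝ)^((i:ℕ)+j - r) := by
            calc (Nat.choose (κ n) j:ℝ) ≤ (((κ n)^j : ℕ):ℝ) := by
                  exact_mod_cast Nat.choose_le_pow (κ n) j
            _ = ((κ n):ℝ)^j := by push_cast; rfl
            _ ≤ ((κ n):ℝ)^((i:ℕ)+j - r) := pow_le_pow_right₀ hkR (by omega)
          calc (Nat.choose (κ n) j:ℝ) * ‖padVec (zz n) ((i:ℕ)+j)‖
              ≤ ((κ n):ℝ)^((i:ℕ)+j - r) * ‖padVec (zz n) ((i:ℕ)+j)‖ :=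
                mul_le_mul_of_nonneg_right hch (norm_nonneg _)
          _ = ‖D n ⟨(i:ℕ)+j - r, hm⟩‖ := hDm.symm
          _ ≤ VD n := by
                rw [hVD]
                exact Finset.single_le_sum (f := fun m => ‖D n m‖) (fun m _ => norm_nonneg _)
                  (Finset.mem_univ _)
        · rw [padVec_eq_zero _ _ (by omega), mul_zero, norm_zero]
          rw [hVD]
          exact Finset.sum_nonneg (fun m _ => norm_nonneg _)
      calc ∑ j ∈ Finset.range (2*r),
            ‖(Nat.choose (κ n) j : ℂ) * lam^(κ n) * (lam⁻¹)^j * padVec (zz n) ((i:ℕ)+j)‖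
          ≤ ∑ _j ∈ Finset.range (2*r), VD n := Finset.sum_le_sum hterm
      _ = (2*r) * VD n := by
          rw [Finset.sum_const, Finset.card_range, nsmul_eq_mul]; push_cast; ring
    · have h := hVD0.const_mul ((2*r : ℝ))
      simpa using h
  exact tendsto_nhds_unique hAzlim hAzzero

end JordanAux

theorem stmt16 (r : ℕ) (lam : ℂ) (hlam : ‖lam‖ = 1) (x : Fin (2 * r) → ℂ) :
    ((matJ (jordanBlock (2 * r) lam) x).Nonempty ↔ ∀ i : Fin (2 * r), r ≤ (i : ℕ) → x i = 0) ∧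
    ((∀ i : Fin (2 * r), r ≤ (i : ℕ) → x i = 0) →
      matJ (jordanBlock (2 * r) lam) x = {y | ∀ i : Fin (2 * r), r ≤ (i : ℕ) → y i = 0}) := by
  constructor
  · constructor
    · rintro ⟨y, hy⟩
      exact (matJ_necessary r lam hlam x y hy).1
    · intro hx
      exact ⟨(fun _ => 0), mem_matJ_of r lam hlam x (fun _ => 0) hx (fun _ _ => rfl)⟩
  · intro hx
    ext y
    constructor
    · intro hy
      exact (matJ_necessary r lam hlam x y hy).2
    · intro hy
      exact mem_matJ_of r lam hlam x y hx hy
end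

section
/- Let A be the 3×3 Jordan block over ℂ with eigenvalue λ, |λ| > 1. If x ∈ ℂ³ is nonzero then J(x) = ∅, while J(0) = ℂ³. -/
open Filter Topology

namespace S18

noncomputable def Ak (lam : ℂ) (k : ℕ) : Matrix (Fin 3) (Fin 3) ℂ :=
  !![lam ^ (k:ℤ), (k:ℂ) * lam ^ ((k:ℤ)-1), (k:ℂ)*((k:ℂ)-1)/2 * lam ^ ((k:ℤ)-2);
     0, lam ^ (k:ℤ), (k:ℂ) * lam ^ ((k:ℤ)-1);
     0, 0, lam ^ (k:ℤ)]

noncomputable def Bk (lam : ℂ) (k : ℕ) : Matrix (Fin 3) (Fin 3) ℂ :=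
  !![lam ^ (-(k:ℤ)), -(k:ℂ) * lam ^ (-(k:ℤ)-1), (k:ℂ)*((k:ℂ)+1)/2 * lam ^ (-(k:ℤ)-2);
     0, lam ^ (-(k:ℤ)), -(k:ℂ) * lam ^ (-(k:ℤ)-1);
     0, 0, lam ^ (-(k:ℤ))]

variable {lam : ℂ}

lemma e1 (hl : lam ≠ 0) (k : ℕ) : lam ^ ((k:ℤ)+1) = lam ^ k * lam := by
  rw [zpow_add₀ hl, zpow_natCast, zpow_one]

lemma e2 (hl : lam ≠ 0) (k : ℕ) : lam ^ ((k:ℤ)-1) = lam ^ k / lam := by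
  rw [zpow_sub₀ hl, zpow_natCast, zpow_one]

lemma e3 (hl : lam ≠ 0) (k : ℕ) : lam ^ ((k:ℤ)-2) = lam ^ k / lam ^ 2 := by
  rw [zpow_sub₀ hl, zpow_natCast, show (2:ℤ)=((2:ℕ):ℤ) by norm_num, zpow_natCast]

lemma e4 (hl : lam ≠ 0) (k : ℕ) : lam ^ ((k:ℤ)+1-2) = lam ^ k / lam := by
  rw [show (k:ℤ)+1-2 = (k:ℤ)-1 by ring, e2 hl]

lemma e5 (hl : lam ≠ 0) (k : ℕ) : lam ^ (-(k:ℤ)) = (lam ^ k)⁻¹ := by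
  rw [zpow_neg, zpow_natCast]

lemma e6 (hl : lam ≠ 0) (k : ℕ) : lam ^ (-(k:ℤ)-1) = (lam ^ k * lam)⁻¹ := by
  rw [show -(k:ℤ)-1 = -((k:ℤ)+1) by ring, zpow_neg, e1 hl]

lemma e7 (hl : lam ≠ 0) (k : ℕ) : lam ^ (-(k:ℤ)-2) = (lam ^ k * lam ^ 2)⁻¹ := by
  rw [show -(k:ℤ)-2 = -((k:ℤ)+2) by ring, zpow_neg, zpow_add₀ hl, zpow_natCast,
    show (2:ℤ)=((2:ℕ):ℤ) by norm_num, zpow_natCast]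

lemma jordan_eq (lam : ℂ) : jordanBlock 3 lam = !![lam,1,0;0,lam,1;0,0,lam] := by
  ext i j
  fin_cases i <;> fin_cases j <;> simp [jordanBlock, Matrix.vecHead, Matrix.vecTail]

lemma pow_eq (hl : lam ≠ 0) (k : ℕ) : (jordanBlock 3 lam) ^ k = Ak lam k := by
  induction k with
  | zero =>
    ext i j
    fin_cases i <;> fin_cases j <;>
      simp [Ak, Matrix.one_apply, Matrix.vecHead, Matrix.vecTail]
  | succ k ih =>
    rw [pow_succ, ih, jordan_eq]
    ext i j
    fin_cases i <;> fin_cases j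
    all_goals
      simp [Ak, Matrix.mul_apply, Fin.sum_univ_three, Matrix.vecHead, Matrix.vecTail]
    all_goals try simp only [e1 hl, e2 hl, e3 hl, e4 hl, e5 hl, e6 hl, e7 hl]
    all_goals (have hp : lam ^ k ≠ 0 := pow_ne_zero _ hl; field_simp [hp]; try ring1)
  all_goals try (rw [div_add' _ _ _ (by simp [mul_eq_zero, hl, hp])]; rw [div_eq_zero_iff]; left; ring1)

lemma AB (hl : lam ≠ 0) (k : ℕ) : Ak lam k * Bk lam k = 1 := by
  ext i j
  fin_cases i <;> fin_cases j
  all_goals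
    simp [Ak, Bk, Matrix.mul_apply, Fin.sum_univ_three, Matrix.one_apply, Matrix.vecHead,
      Matrix.vecTail]
  all_goals try simp only [e1 hl, e2 hl, e3 hl, e4 hl, e5 hl, e6 hl, e7 hl]
  all_goals (have hp : lam ^ k ≠ 0 := pow_ne_zero _ hl; field_simp [hp]; try ring1)
  all_goals try (rw [div_add' _ _ _ (by simp [mul_eq_zero, hl, hp])]; rw [div_eq_zero_iff]; left; ring1)

lemma BA (hl : lam ≠ 0) (k : ℕ) : Bk lam k * Ak lam k = 1 := by
  ext i j
  fin_cases i <;> fin_cases j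
  all_goals
    simp [Ak, Bk, Matrix.mul_apply, Fin.sum_univ_three, Matrix.one_apply, Matrix.vecHead,
      Matrix.vecTail]
  all_goals try simp only [e1 hl, e2 hl, e3 hl, e4 hl, e5 hl, e6 hl, e7 hl]
  all_goals (have hp : lam ^ k ≠ 0 := pow_ne_zero _ hl; field_simp [hp]; try ring1)
  all_goals try (rw [div_add' _ _ _ (by simp [mul_eq_zero, hl, hp])]; rw [div_eq_zero_iff]; left; ring1)

lemma lam_ne (hlam : 1 < ‖lam‖) : lam ≠ 0 := by
  rintro rfl; simp at hlam; linarith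

lemma tendsto_aux (hlam : 1 < ‖lam‖) (j : ℕ) (c : ℤ) :
    Tendsto (fun m : ℕ => (m:ℂ)^j * lam ^ (-(m:ℤ)+c)) atTop (𝓝 0) := by
  have hpos : (0:ℝ) < ‖lam‖ := lt_trans zero_lt_one hlam
  rw [tendsto_zero_iff_norm_tendsto_zero]
  have key : ∀ m : ℕ, ‖(m:ℂ)^j * lam ^ (-(m:ℤ)+c)‖
      = ((m:ℝ)^j / (‖lam‖)^m) * (‖lam‖)^c := by
    intro m
    rw [norm_mul, norm_pow, norm_zpow, Complex.norm_natCast,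
      zpow_add₀ (ne_of_gt hpos), zpow_neg, zpow_natCast]
    ring
  simp only [key]
  simpa using (tendsto_pow_const_div_const_pow_of_one_lt j hlam).mul_const
    ((‖lam‖)^c)

lemma entries (hlam : 1 < ‖lam‖) (i j : Fin 3) :
    Tendsto (fun m : ℕ => Bk lam m i j) atTop (𝓝 0) := by
  have t0 : Tendsto (fun m : ℕ => lam ^ (-(m:ℤ))) atTop (𝓝 0) := by
    simpa using tendsto_aux hlam 0 0
  have t1 : Tendsto (fun m : ℕ => -(m:ℂ) * lam ^ (-(m:ℤ)-1)) atTop (𝓝 0) := by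
    have h := (tendsto_aux hlam 1 (-1)).neg
    simp only [neg_zero] at h
    refine h.congr fun m => ?_
    rw [show -(m:ℤ)-1 = -(m:ℤ)+(-1) by ring]
    ring
  have t2 : Tendsto (fun m : ℕ => (m:ℂ)*((m:ℂ)+1)/2 * lam ^ (-(m:ℤ)-2)) atTop (𝓝 0) := by
    have h := (((tendsto_aux hlam 2 (-2)).add (tendsto_aux hlam 1 (-2))).const_mul (1/2 : ℂ))
    simp only [add_zero, mul_zero] at h
    refine h.congr fun m => ?_
    rw [show -(m:ℤ)-2 = -(m:ℤ)+(-2) by ring]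
    ring
  fin_cases i <;> fin_cases j <;>
    simp only [Bk, Matrix.cons_val', Matrix.cons_val_zero, Matrix.cons_val_one, Matrix.head_cons,
      Matrix.empty_val', Matrix.cons_val_fin_one, Matrix.head_fin_const, Matrix.cons_val_two,
      Matrix.tail_cons, Fin.mk_zero, Fin.mk_one, Matrix.of_apply, Matrix.vecHead, Matrix.vecTail,
      Function.comp] <;>
    first
      | exact t0
      | exact t1
      | exact t2
      | exact tendsto_const_nhds

lemma key (hlam : 1 < ‖lam‖) {k : ℕ → ℕ} (hk : StrictMono k)
    {w : ℕ → Fin 3 → ℂ} {y : Fin 3 → ℂ} (hw : Tendsto w atTop (𝓝 y)) :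
    Tendsto (fun n => (Bk lam (k n)).mulVec (w n)) atTop (𝓝 0) := by
  have hb : ∀ j : Fin 3, IsBoundedUnder (· ≤ ·) atTop ((‖·‖) ∘ fun n => w n j) :=
    fun j => (((tendsto_pi_nhds.1 hw) j).norm).isBoundedUnder_le
  rw [tendsto_pi_nhds]
  intro i
  have H : ∀ j : Fin 3, Tendsto (fun n => Bk lam (k n) i j * w n j) atTop (𝓝 0) := by
    intro j
    exact ((entries hlam i j).comp hk.tendsto_atTop).zero_mul_isBoundedUnder_le (hb j)
  have := ((H 0).add (H 1)).add (H 2)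
  simp only [add_zero] at this
  refine this.congr fun n => ?_
  simp [Matrix.mulVec, dotProduct, Fin.sum_univ_three]

end S18

theorem stmt18 (lam : ℂ) (hlam : 1 < ‖lam‖) :
    (∀ x : Fin 3 → ℂ, x ≠ 0 → matJ (jordanBlock 3 lam) x = ∅) ∧
    matJ (jordanBlock 3 lam) 0 = Set.univ := by
  have hl : lam ≠ 0 := S18.lam_ne hlam
  constructor
  · intro x hx
    ext y
    simp only [Set.mem_empty_iff_false, iff_false]
    rintro ⟨k, z, hk, hk0, hz, hw⟩
    have hzeq : ∀ n, z n = (S18.Bk lam (k n)).mulVec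
        ((jordanBlock 3 lam ^ (k n)).mulVec (z n)) := by
      intro n
      rw [Matrix.mulVec_mulVec, S18.pow_eq hl, S18.BA hl, Matrix.one_mulVec]
    have h0 : Tendsto z atTop (𝓝 0) :=
      (S18.key hlam hk hw).congr fun n => (hzeq n).symm
    exact hx (tendsto_nhds_unique hz h0)
  · ext y
    simp only [Set.mem_univ, iff_true]
    refine ⟨fun n => n + 1, fun n => (S18.Bk lam (n+1)).mulVec y,
      fun a b h => Nat.succ_lt_succ h, Nat.succ_pos 0, ?_, ?_⟩
    · exact S18.key hlam (fun a b h => Nat.succ_lt_succ h : StrictMono fun n => n + 1)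
        (tendsto_const_nhds (x := y))
    · have heq : ∀ n : ℕ, (jordanBlock 3 lam ^ (n+1)).mulVec
          ((S18.Bk lam (n+1)).mulVec y) = y := by
        intro n
        rw [Matrix.mulVec_mulVec, S18.pow_eq hl, S18.AB hl, Matrix.one_mulVec]
      simp only [heq]
      exact tendsto_const_nhds
end
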